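/- arXiv:0711.0951 — 5 statements merged into one kernel-verified Lean document; each statement's English description precedes it below -/
import Mathlib

section
/- Let ψ, f ∈ L²(ℝ²) and let K : SE(2) → ℝ be integrable with respect to the Haar measure μ. Then for every g ∈ SE(2), the SE(2)-convolution of K with the orientation score of f is again an orientation score: ∫_{SE(2)} K(h⁻¹ g) (W_ψ f)(h) dμ(h) = (W_{ψ̃} f)(g), where ψ̃ ∈ L²(ℝ²) is the Bochner integral ψ̃ = ∫_{SE(2)} (U_{h⁻¹} ψ) · K(h) dμ(h). -/
/-!
STATEMENT 4: For ψ, f ∈ L²(ℝ²) and K ∈ L¹(SE(2)) (Haar measure), the SE(2)-convolution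
of K with the orientation score W_ψ f is again an orientation score:
∫_{SE(2)} K(h⁻¹g) (W_ψ f)(h) dμ(h) = (W_{ψ̃} f)(g), where
ψ̃ = ∫_{SE(2)} (U_{h⁻¹} ψ) · K(h) dμ(h), i.e. ψ̃(y) = ∫_{SE(2)} K(h) · ψ(R_{θ_h} y + x_h) dμ(h).
Here SE(2) is realized as ℝ² × (ℝ/2πℤ), with Haar measure the product of Lebesgue measure
on ℝ² and the Haar (Lebesgue) measure on ℝ/2πℤ = Real.Angle, and for h = (x, θ),
h⁻¹ g = (R_θ⁻¹(x_g − x), θ_g − θ), (U_{h⁻¹}ψ)(y) = ψ(R_θ y + x).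
-/

open MeasureTheory Real

instance : Fact (0 < 2 * π) := ⟨by positivity⟩

/-- The Haar (Lebesgue) measure on the circle of angles `ℝ/2πℤ`, of total mass 2π. -/
noncomputable instance : MeasureSpace Real.Angle :=
  inferInstanceAs (MeasureSpace (AddCircle (2 * π)))

/-- Counterclockwise rotation of ℝ² by an angle `θ ∈ ℝ/2πℤ`. -/
noncomputable def rotA (θ : Real.Angle) (v : EuclideanSpace ℝ (Fin 2)) :
    EuclideanSpace ℝ (Fin 2) :=
  (EuclideanSpace.equiv (Fin 2) ℝ).symm
    ![θ.cos * v 0 - θ.sin * v 1, θ.sin * v 0 + θ.cos * v 1]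

/-- The orientation score `(W_ψ f)(x, θ) = ∫ conj(ψ(R_θ⁻¹ (y - x))) f(y) dy`. -/
noncomputable def WscoreA (ψ f : EuclideanSpace ℝ (Fin 2) → ℂ)
    (x : EuclideanSpace ℝ (Fin 2)) (θ : Real.Angle) : ℂ :=
  ∫ y, (starRingEnd ℂ) (ψ (rotA (-θ) (y - x))) * f y

/- ### Auxiliary instances for `Real.Angle` -/

instance : BorelSpace Real.Angle := inferInstanceAs (BorelSpace (AddCircle (2 * π)))
instance : (volume : Measure Real.Angle).IsNegInvariant :=
  inferInstanceAs ((volume : Measure (AddCircle (2 * π))).IsNegInvariant)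
instance : (volume : Measure Real.Angle).IsAddLeftInvariant :=
  inferInstanceAs ((volume : Measure (AddCircle (2 * π))).IsAddLeftInvariant)
instance : (volume : Measure Real.Angle).IsAddRightInvariant :=
  inferInstanceAs ((volume : Measure (AddCircle (2 * π))).IsAddRightInvariant)
instance : IsFiniteMeasure (volume : Measure Real.Angle) :=
  inferInstanceAs (IsFiniteMeasure (volume : Measure (AddCircle (2 * π))))

namespace Stmt4Aux

abbrev E2 := EuclideanSpace ℝ (Fin 2)
abbrev SE2 := E2 × Real.Angle

/- ### Basic properties of `rotA` -/

lemma rotA_apply_zero (θ : Real.Angle) (v : E2) :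
    rotA θ v 0 = θ.cos * v 0 - θ.sin * v 1 := rfl

lemma rotA_apply_one (θ : Real.Angle) (v : E2) :
    rotA θ v 1 = θ.sin * v 0 + θ.cos * v 1 := rfl

lemma e2_ext {u v : E2} (h0 : u 0 = v 0) (h1 : u 1 = v 1) : u = v := by
  ext i
  fin_cases i
  · exact h0
  · exact h1

lemma rotA_zero (v : E2) : rotA 0 v = v := by
  refine e2_ext ?_ ?_ <;>
    simp [rotA_apply_zero, rotA_apply_one, Real.Angle.cos_zero, Real.Angle.sin_zero]

lemma rotA_add (a b : Real.Angle) (v : E2) : rotA (a + b) v = rotA a (rotA b v) := by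
  refine e2_ext ?_ ?_ <;>
    simp only [rotA_apply_zero, rotA_apply_one, Real.Angle.cos_add, Real.Angle.sin_add] <;>
    ring

lemma rotA_neg_cancel (a : Real.Angle) (v : E2) : rotA (-a) (rotA a v) = v := by
  rw [← rotA_add, neg_add_cancel, rotA_zero]

lemma rotA_cancel_neg (a : Real.Angle) (v : E2) : rotA a (rotA (-a) v) = v := by
  rw [← rotA_add, add_neg_cancel, rotA_zero]

lemma rotA_sub_cancel (a b : Real.Angle) (v : E2) : rotA (a - b) (rotA (b - a) v) = v := by
  rw [← rotA_add, sub_add_sub_cancel, sub_self, rotA_zero]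

lemma rotA_norm (θ : Real.Angle) (v : E2) : ‖rotA θ v‖ = ‖v‖ := by
  rw [EuclideanSpace.norm_eq, EuclideanSpace.norm_eq]
  congr 1
  rw [Fin.sum_univ_two, Fin.sum_univ_two]
  have h := θ.cos_sq_add_sin_sq
  simp only [rotA_apply_zero, rotA_apply_one, Real.norm_eq_abs, sq_abs]
  linear_combination (v 0 ^ 2 + v 1 ^ 2) * h

/-- `rotA θ` as a linear isometry equivalence. -/
noncomputable def rotLI (θ : Real.Angle) : E2 ≃ₗᵢ[ℝ] E2 where
  toFun := rotA θ
  invFun := rotA (-θ)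
  map_add' u v := by
    refine e2_ext ?_ ?_ <;>
      simp only [rotA_apply_zero, rotA_apply_one, PiLp.add_apply] <;> ring
  map_smul' c v := by
    refine e2_ext ?_ ?_ <;>
      simp only [rotA_apply_zero, rotA_apply_one, PiLp.smul_apply, RingHom.id_apply,
        smul_eq_mul] <;> ring
  left_inv v := rotA_neg_cancel θ v
  right_inv v := rotA_cancel_neg θ v
  norm_map' v := rotA_norm θ v

lemma rotA_map_add (θ : Real.Angle) (u v : E2) :
    rotA θ (u + v) = rotA θ u + rotA θ v := (rotLI θ).map_add u v

lemma measurePreserving_rotA (θ : Real.Angle) :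
    MeasurePreserving (rotA θ) (volume : Measure E2) volume :=
  (rotLI θ).measurePreserving

lemma continuous_rotA : Continuous (fun p : Real.Angle × E2 => rotA p.1 p.2) := by
  have hc0 : Continuous fun p : Real.Angle × E2 => p.2 0 :=
    (EuclideanSpace.proj (0 : Fin 2)).continuous.comp continuous_snd
  have hc1 : Continuous fun p : Real.Angle × E2 => p.2 1 :=
    (EuclideanSpace.proj (1 : Fin 2)).continuous.comp continuous_snd
  have hcos : Continuous fun p : Real.Angle × E2 => p.1.cos :=
    Real.Angle.continuous_cos.comp continuous_fst
  have hsin : Continuous fun p : Real.Angle × E2 => p.1.sin :=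
    Real.Angle.continuous_sin.comp continuous_fst
  unfold rotA
  refine ((EuclideanSpace.equiv (Fin 2) ℝ).symm.continuous).comp ?_
  refine continuous_pi fun i => ?_
  fin_cases i
  · exact ((hcos.mul hc0).sub (hsin.mul hc1))
  · exact ((hsin.mul hc0).add (hcos.mul hc1))

/- ### The change of variables `h ↦ h⁻¹ g` on SE(2) -/

variable (g : SE2)

/-- The map `h ↦ h⁻¹ g` on SE(2). -/
noncomputable def Tmap (h : SE2) : SE2 := (rotA (-h.2) (g.1 - h.1), g.2 - h.2)

/-- The inverse map `k ↦ g k⁻¹`. -/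
noncomputable def Tinv (k : SE2) : SE2 := (g.1 - rotA (g.2 - k.2) k.1, g.2 - k.2)

lemma Tinv_Tmap (h : SE2) : Tinv g (Tmap g h) = h := by
  unfold Tmap Tinv
  refine Prod.ext ?_ ?_
  · show g.1 - rotA (g.2 - (g.2 - h.2)) (rotA (-h.2) (g.1 - h.1)) = h.1
    rw [sub_sub_cancel]
    rw [rotA_cancel_neg, sub_sub_cancel]
  · exact sub_sub_cancel _ _

lemma Tmap_Tinv (k : SE2) : Tmap g (Tinv g k) = k := by
  unfold Tmap Tinv
  refine Prod.ext ?_ ?_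
  · show rotA (-(g.2 - k.2)) (g.1 - (g.1 - rotA (g.2 - k.2) k.1)) = k.1
    rw [sub_sub_cancel, neg_sub, rotA_sub_cancel]
  · exact sub_sub_cancel _ _

lemma continuous_Tmap : Continuous (Tmap g) := by
  unfold Tmap
  refine Continuous.prodMk ?_ (continuous_const.sub continuous_snd)
  exact continuous_rotA.comp
    ((continuous_snd.neg).prodMk (continuous_const.sub continuous_fst))

lemma continuous_Tinv : Continuous (Tinv g) := by
  unfold Tinv
  refine Continuous.prodMk ?_ (continuous_const.sub continuous_snd)
  refine Continuous.sub continuous_const ?_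
  exact continuous_rotA.comp
    ((continuous_const.sub continuous_snd).prodMk continuous_fst)

/-- `Tmap` as a measurable equivalence. -/
noncomputable def TmeasEquiv : SE2 ≃ᵐ SE2 where
  toFun := Tmap g
  invFun := Tinv g
  left_inv := Tinv_Tmap g
  right_inv := Tmap_Tinv g
  measurable_toFun := (continuous_Tmap g).measurable
  measurable_invFun := (continuous_Tinv g).measurable

lemma measurePreserving_Tmap :
    MeasurePreserving (Tmap g) (volume : Measure SE2) volume := by
  have h1 : MeasurePreserving (fun θ : Real.Angle => g.2 - θ) volume volume :=
    Measure.measurePreserving_sub_left volume g.2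
  have h2 : ∀ θ : Real.Angle,
      MeasurePreserving (fun x : E2 => rotA (-θ) (g.1 - x)) volume volume := fun θ =>
    (measurePreserving_rotA (-θ)).comp (Measure.measurePreserving_sub_left volume g.1)
  have hmeas : Measurable (Function.uncurry fun (θ : Real.Angle) (x : E2) =>
      rotA (-θ) (g.1 - x)) := by
    refine Continuous.measurable ?_
    exact continuous_rotA.comp
      ((continuous_fst.neg).prodMk (continuous_const.sub continuous_snd))
  have hT' : MeasurePreserving
      (fun p : Real.Angle × E2 => (g.2 - p.1, rotA (-p.1) (g.1 - p.2)))
      ((volume : Measure Real.Angle).prod volume)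
      ((volume : Measure Real.Angle).prod volume) :=
    h1.skew_product hmeas (Filter.Eventually.of_forall fun θ => (h2 θ).map_eq)
  have key := (Measure.measurePreserving_swap).comp
    (hT'.comp (Measure.measurePreserving_swap
      (μ := (volume : Measure E2)) (ν := (volume : Measure Real.Angle))))
  have hfun : (Prod.swap ∘ (fun p : Real.Angle × E2 => (g.2 - p.1, rotA (-p.1) (g.1 - p.2)))
      ∘ Prod.swap) = Tmap g := by
    funext h; rfl
  rw [Measure.volume_eq_prod]
  rw [hfun] at key
  exact key

/- ### The affine map in `y` appearing after the change of variables -/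

/-- The map `y ↦ R_{θ_k - θ_g}(y - x_g) + x_k`. -/
noncomputable def Amap (k : SE2) (y : E2) : E2 := rotA (k.2 - g.2) (y - g.1) + k.1

lemma measurePreserving_Amap (k : SE2) :
    MeasurePreserving (Amap g k) (volume : Measure E2) volume :=
  (measurePreserving_add_right volume k.1).comp
    ((measurePreserving_rotA (k.2 - g.2)).comp (measurePreserving_sub_right volume g.1))

lemma continuous_Amap (k : SE2) : Continuous (Amap g k) := by
  unfold Amap
  exact (((rotLI (k.2 - g.2)).continuous.comp (continuous_id.sub continuous_const)).add
    continuous_const)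

/-- `Amap g k` as a measurable equivalence. -/
noncomputable def AmapEquiv (k : SE2) : E2 ≃ᵐ E2 where
  toFun := Amap g k
  invFun := fun z => rotA (g.2 - k.2) (z - k.1) + g.1
  left_inv := fun y => by
    show rotA (g.2 - k.2) (Amap g k y - k.1) + g.1 = y
    unfold Amap
    rw [add_sub_cancel_right, rotA_sub_cancel, sub_add_cancel]
  right_inv := fun z => by
    show Amap g k (rotA (g.2 - k.2) (z - k.1) + g.1) = z
    unfold Amap
    rw [add_sub_cancel_right, rotA_sub_cancel, sub_add_cancel]
  measurable_toFun := (continuous_Amap g k).measurable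
  measurable_invFun := by
    refine Continuous.measurable ?_
    exact ((rotLI (g.2 - k.2)).continuous.comp (continuous_id.sub continuous_const)).add
      continuous_const

lemma measurable_uncurry_Amap :
    Measurable (fun p : SE2 × E2 => Amap g p.1 p.2) := by
  refine Continuous.measurable ?_
  unfold Amap
  refine Continuous.add ?_ (continuous_fst.fst)
  exact continuous_rotA.comp
    (((continuous_fst.snd).sub continuous_const).prodMk
      (continuous_snd.sub continuous_const))

/-- Conjugation commutes with real scalar multiplication on ℂ. -/
lemma conj_real_smul (r : ℝ) (z : ℂ) :
    (starRingEnd ℂ) (r • z) = r • (starRingEnd ℂ) z := by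
  simp [Complex.real_smul, map_mul, Complex.conj_ofReal]

end Stmt4Aux

open Stmt4Aux

theorem stmt_4 (ψ f : EuclideanSpace ℝ (Fin 2) → ℂ)
    (hψ : MemLp ψ 2 volume) (hf : MemLp f 2 volume)
    (K : EuclideanSpace ℝ (Fin 2) × Real.Angle → ℝ) (hK : Integrable K)
    (g : EuclideanSpace ℝ (Fin 2) × Real.Angle) :
    (∫ h : EuclideanSpace ℝ (Fin 2) × Real.Angle,
        K (rotA (-h.2) (g.1 - h.1), g.2 - h.2) • WscoreA ψ f h.1 h.2)
      = WscoreA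
          (fun y => ∫ h : EuclideanSpace ℝ (Fin 2) × Real.Angle, K h • ψ (rotA h.2 y + h.1))
          f g.1 g.2 := by
  have hT := measurePreserving_Tmap g
  have hTemb : MeasurableEmbedding (Tmap g) := (TmeasEquiv g).measurableEmbedding
  -- Step 1: change of variables h ↦ h⁻¹ g
  have step1 : (∫ h : SE2, K (rotA (-h.2) (g.1 - h.1), g.2 - h.2) • WscoreA ψ f h.1 h.2)
      = ∫ k : SE2, K k • WscoreA ψ f (g.1 - rotA (g.2 - k.2) k.1) (g.2 - k.2) := by
    calc (∫ h : SE2, K (rotA (-h.2) (g.1 - h.1), g.2 - h.2) • WscoreA ψ f h.1 h.2)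
        = ∫ h : SE2, (fun k : SE2 =>
            K k • WscoreA ψ f (g.1 - rotA (g.2 - k.2) k.1) (g.2 - k.2)) (Tmap g h) := by
          congr 1
          funext h
          show K (rotA (-h.2) (g.1 - h.1), g.2 - h.2) • WscoreA ψ f h.1 h.2
            = K (Tmap g h) •
              WscoreA ψ f (g.1 - rotA (g.2 - (Tmap g h).2) ((Tmap g h).1)) (g.2 - (Tmap g h).2)
          have h1 : g.2 - (Tmap g h).2 = h.2 := sub_sub_cancel _ _
          have h2 : g.1 - rotA (g.2 - (Tmap g h).2) ((Tmap g h).1) = h.1 := by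
            rw [h1]
            show g.1 - rotA h.2 (rotA (-h.2) (g.1 - h.1)) = h.1
            rw [rotA_cancel_neg, sub_sub_cancel]
          rw [h2, h1]
          rfl
      _ = ∫ k : SE2, K k • WscoreA ψ f (g.1 - rotA (g.2 - k.2) k.1) (g.2 - k.2) :=
          hT.integral_comp hTemb
            (fun k : SE2 => K k • WscoreA ψ f (g.1 - rotA (g.2 - k.2) k.1) (g.2 - k.2))
  -- Step 2: rewrite the translated orientation score
  have hW : ∀ k : SE2, WscoreA ψ f (g.1 - rotA (g.2 - k.2) k.1) (g.2 - k.2)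
      = ∫ y, (starRingEnd ℂ) (ψ (Amap g k y)) * f y := by
    intro k
    unfold WscoreA
    congr 1
    funext y
    congr 2
    have e1 : y - (g.1 - rotA (g.2 - k.2) k.1) = (y - g.1) + rotA (g.2 - k.2) k.1 := by abel
    rw [e1, neg_sub, rotA_map_add, rotA_sub_cancel]
    rfl
  -- Step 4: rewrite RHS
  have step4 : WscoreA (fun y => ∫ h : SE2, K h • ψ (rotA h.2 y + h.1)) f g.1 g.2
      = ∫ y, ∫ k : SE2, K k • ((starRingEnd ℂ) (ψ (Amap g k y)) * f y) := by
    unfold WscoreA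
    congr 1
    funext y
    have harg : ∀ k : SE2, rotA k.2 (rotA (-g.2) (y - g.1)) + k.1 = Amap g k y := by
      intro k
      unfold Amap
      rw [← rotA_add, ← sub_eq_add_neg]
    show (starRingEnd ℂ) (∫ h : SE2, K h • ψ (rotA h.2 (rotA (-g.2) (y - g.1)) + h.1)) * f y
      = ∫ k : SE2, K k • ((starRingEnd ℂ) (ψ (Amap g k y)) * f y)
    calc (starRingEnd ℂ) (∫ h : SE2, K h • ψ (rotA h.2 (rotA (-g.2) (y - g.1)) + h.1)) * f y
        = (starRingEnd ℂ) (∫ k : SE2, K k • ψ (Amap g k y)) * f y := by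
          have hint_eq : (∫ h : SE2, K h • ψ (rotA h.2 (rotA (-g.2) (y - g.1)) + h.1))
              = ∫ k : SE2, K k • ψ (Amap g k y) :=
            integral_congr_ae (Filter.Eventually.of_forall fun k => by
              show K k • ψ (rotA k.2 (rotA (-g.2) (y - g.1)) + k.1) = K k • ψ (Amap g k y)
              rw [harg])
          rw [hint_eq]
      _ = (∫ k : SE2, K k • (starRingEnd ℂ) (ψ (Amap g k y))) * f y := by
          rw [← integral_conj]
          have : (∫ k : SE2, (starRingEnd ℂ) (K k • ψ (Amap g k y)))
              = ∫ k : SE2, K k • (starRingEnd ℂ) (ψ (Amap g k y)) :=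
            integral_congr_ae (Filter.Eventually.of_forall fun k => conj_real_smul _ _)
          rw [this]
      _ = ∫ k : SE2, (K k • (starRingEnd ℂ) (ψ (Amap g k y))) * f y :=
          (integral_mul_const _ _).symm
      _ = ∫ k : SE2, K k • ((starRingEnd ℂ) (ψ (Amap g k y)) * f y) :=
          integral_congr_ae (Filter.Eventually.of_forall fun k => smul_mul_assoc _ _ _)
  -- Integrability on the product space
  have hFm : AEStronglyMeasurable
      (fun p : SE2 × E2 => K p.1 • ((starRingEnd ℂ) (ψ (Amap g p.1 p.2)) * f p.2))
      ((volume : Measure SE2).prod volume) := by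
    have hS : MeasurePreserving (fun p : SE2 × E2 => (p.1, Amap g p.1 p.2))
        ((volume : Measure SE2).prod volume) ((volume : Measure SE2).prod volume) :=
      (MeasurePreserving.id _).skew_product (measurable_uncurry_Amap g)
        (Filter.Eventually.of_forall fun k => (measurePreserving_Amap g k).map_eq)
    have hψA : AEStronglyMeasurable (fun p : SE2 × E2 => ψ (Amap g p.1 p.2))
        ((volume : Measure SE2).prod volume) :=
      (hψ.1.comp_quasiMeasurePreserving Measure.quasiMeasurePreserving_snd).comp_quasiMeasurePreserving
        hS.quasiMeasurePreserving
    have hconj : AEStronglyMeasurable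
        (fun p : SE2 × E2 => (starRingEnd ℂ) (ψ (Amap g p.1 p.2)))
        ((volume : Measure SE2).prod volume) := by
      exact Complex.continuous_conj.comp_aestronglyMeasurable hψA
    have hfm : AEStronglyMeasurable (fun p : SE2 × E2 => f p.2)
        ((volume : Measure SE2).prod volume) :=
      hf.1.comp_quasiMeasurePreserving Measure.quasiMeasurePreserving_snd
    have hKm : AEStronglyMeasurable (fun p : SE2 × E2 => K p.1)
        ((volume : Measure SE2).prod volume) :=
      hK.1.comp_quasiMeasurePreserving Measure.quasiMeasurePreserving_fst
    exact hKm.smul (hconj.mul hfm)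
  have hconjψk : ∀ k : SE2,
      MemLp (fun y => (starRingEnd ℂ) (ψ (Amap g k y))) 2 (volume : Measure E2) := by
    intro k
    have h1 : MemLp (fun y => ψ (Amap g k y)) 2 (volume : Measure E2) :=
      hψ.comp_measurePreserving (measurePreserving_Amap g k)
    refine h1.of_le ?_ (Filter.Eventually.of_forall fun y => ?_)
    · exact Complex.continuous_conj.comp_aestronglyMeasurable h1.1
    · simp [RCLike.norm_conj]
  have hintk : ∀ k : SE2,
      Integrable (fun y => (starRingEnd ℂ) (ψ (Amap g k y)) * f y) (volume : Measure E2) := by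
    intro k
    have hsm : MemLp ((fun y => (starRingEnd ℂ) (ψ (Amap g k y))) • f) 1
        (volume : Measure E2) := by
      haveI : ENNReal.HolderTriple 2 2 1 := ⟨by rw [inv_one, ENNReal.inv_two_add_inv_two]⟩
      exact MemLp.smul hf (hconjψk k)
    have := memLp_one_iff_integrable.mp hsm
    exact this.congr (Filter.Eventually.of_forall fun y => by
      simp [Pi.smul_apply, smul_eq_mul])
  have hF : Integrable
      (fun p : SE2 × E2 => K p.1 • ((starRingEnd ℂ) (ψ (Amap g p.1 p.2)) * f p.2))
      ((volume : Measure SE2).prod volume) := by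
    rw [integrable_prod_iff hFm]
    constructor
    · exact Filter.Eventually.of_forall fun k => (hintk k).smul (K k)
    · -- bound by ‖K k‖ * C via Cauchy–Schwarz
      set Cψ : ℝ := (∫ z, ‖ψ z‖ ^ (2 : ℝ)) ^ ((1 : ℝ) / 2) with hCψ
      set Cf : ℝ := (∫ z, ‖f z‖ ^ (2 : ℝ)) ^ ((1 : ℝ) / 2) with hCf
      have h22 : (2 : ℝ).HolderConjugate 2 := Real.HolderConjugate.two_two
      have h2e : ENNReal.ofReal (2 : ℝ) = 2 := by
        rw [ENNReal.ofReal_ofNat]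
      refine Integrable.mono' (hK.norm.mul_const (Cψ * Cf))
        (hFm.norm.integral_prod_right') (Filter.Eventually.of_forall fun k => ?_)
      rw [Real.norm_of_nonneg (integral_nonneg fun y => norm_nonneg _)]
      have hψk2 : MemLp (fun y => ψ (Amap g k y)) (ENNReal.ofReal (2 : ℝ))
          (volume : Measure E2) := by
        rw [h2e]; exact hψ.comp_measurePreserving (measurePreserving_Amap g k)
      have hf2 : MemLp f (ENNReal.ofReal (2 : ℝ)) (volume : Measure E2) := by
        rw [h2e]; exact hf
      have hCS := integral_mul_norm_le_Lp_mul_Lq (μ := (volume : Measure E2)) h22 hψk2 hf2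
      have hAemb : MeasurableEmbedding (Amap g k) := (AmapEquiv g k).measurableEmbedding
      have hchg : (∫ y, ‖ψ (Amap g k y)‖ ^ (2 : ℝ)) = ∫ z, ‖ψ z‖ ^ (2 : ℝ) :=
        (measurePreserving_Amap g k).integral_comp hAemb (fun z => ‖ψ z‖ ^ (2 : ℝ))
      calc (∫ y, ‖K k • ((starRingEnd ℂ) (ψ (Amap g k y)) * f y)‖)
          = ∫ y, ‖K k‖ * (‖ψ (Amap g k y)‖ * ‖f y‖) := by
            congr 1
            funext y
            rw [norm_smul, norm_mul, RCLike.norm_conj]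
        _ = ‖K k‖ * ∫ y, ‖ψ (Amap g k y)‖ * ‖f y‖ := integral_const_mul _ _
        _ ≤ ‖K k‖ * (Cψ * Cf) := by
            refine mul_le_mul_of_nonneg_left ?_ (norm_nonneg _)
            rw [hCψ, hCf, ← hchg]
            exact hCS
  -- Assemble
  rw [step1, step4]
  calc (∫ k : SE2, K k • WscoreA ψ f (g.1 - rotA (g.2 - k.2) k.1) (g.2 - k.2))
      = ∫ k : SE2, K k • ∫ y, (starRingEnd ℂ) (ψ (Amap g k y)) * f y := by
        congr 1; funext k; rw [hW]
    _ = ∫ k : SE2, ∫ y, K k • ((starRingEnd ℂ) (ψ (Amap g k y)) * f y) := by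
        congr 1; funext k; rw [integral_smul]
    _ = ∫ y, ∫ k : SE2, K k • ((starRingEnd ℂ) (ψ (Amap g k y)) * f y) :=
        integral_integral_swap hF
end

section
/- Let D₁₁, D₂₂ > 0. The function K_s(x, y, θ) = (1/(D₂₂·√D₁₁)) · (4πs)^{−3/2} · exp(−(θ²/D₁₁ + (x² + y²)/D₂₂)/(4s)) is smooth on ℝ³ × (0,∞), satisfies the left-invariant heat equation ∂K/∂s = D₁₁ ∂_θ(∂_θ K) + D₂₂ (∂_ξ(∂_ξ K) + ∂_η(∂_η K)) at every (x, y, θ) ∈ ℝ³ and s > 0, and has total mass one: ∫_{ℝ³} K_s(x, y, θ) dx dy dθ = 1 for every s > 0. -/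
/-!
STATEMENT 8: For D₁₁, D₂₂ > 0, the kernel
K_s(x,y,θ) = (1/(D₂₂√D₁₁)) (4πs)^{−3/2} exp(−(θ²/D₁₁ + (x²+y²)/D₂₂)/(4s))
is smooth on ℝ³ × (0,∞), solves the left-invariant heat equation
∂K/∂s = D₁₁ ∂_θ² K + D₂₂ (∂_ξ² + ∂_η²) K, and has total mass one.
Points are written p = (x, y, θ) : ℝ × ℝ × ℝ.
-/

open Real MeasureTheory
open scoped ContDiff

/-- The left-invariant derivative `∂_θ f`. -/
noncomputable def Atheta (f : ℝ × ℝ × ℝ → ℝ) (p : ℝ × ℝ × ℝ) : ℝ :=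
  fderiv ℝ f p (0, 0, 1)

/-- The left-invariant derivative `∂_ξ f = cos θ ∂_x f + sin θ ∂_y f`. -/
noncomputable def Axi (f : ℝ × ℝ × ℝ → ℝ) (p : ℝ × ℝ × ℝ) : ℝ :=
  fderiv ℝ f p (Real.cos p.2.2, Real.sin p.2.2, 0)

/-- The left-invariant derivative `∂_η f = −sin θ ∂_x f + cos θ ∂_y f`. -/
noncomputable def Aeta (f : ℝ × ℝ × ℝ → ℝ) (p : ℝ × ℝ × ℝ) : ℝ :=
  fderiv ℝ f p (-Real.sin p.2.2, Real.cos p.2.2, 0)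

/-- The contour-enhancement heat kernel on SE(2) in the case D₂₂ = D₃₃
(angular variable unwrapped to θ ∈ ℝ). -/
noncomputable def Kheat (D11 D22 s : ℝ) (p : ℝ × ℝ × ℝ) : ℝ :=
  (1 / (D22 * Real.sqrt D11)) * (4 * π * s) ^ (-(3 : ℝ) / 2) *
    Real.exp (-(p.2.2 ^ 2 / D11 + (p.1 ^ 2 + p.2.1 ^ 2) / D22) / (4 * s))

noncomputable def pX : (ℝ × ℝ × ℝ) →L[ℝ] ℝ := ContinuousLinearMap.fst ℝ ℝ (ℝ × ℝ)
noncomputable def pY : (ℝ × ℝ × ℝ) →L[ℝ] ℝ :=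
  (ContinuousLinearMap.fst ℝ ℝ ℝ).comp (ContinuousLinearMap.snd ℝ ℝ (ℝ × ℝ))
noncomputable def pT : (ℝ × ℝ × ℝ) →L[ℝ] ℝ :=
  (ContinuousLinearMap.snd ℝ ℝ ℝ).comp (ContinuousLinearMap.snd ℝ ℝ (ℝ × ℝ))

@[simp] lemma pX_apply (v : ℝ × ℝ × ℝ) : pX v = v.1 := rfl
@[simp] lemma pY_apply (v : ℝ × ℝ × ℝ) : pY v = v.2.1 := rfl
@[simp] lemma pT_apply (v : ℝ × ℝ × ℝ) : pT v = v.2.2 := rfl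

lemma hasFDerivAt_x (p : ℝ × ℝ × ℝ) : HasFDerivAt (fun q : ℝ × ℝ × ℝ => q.1) pX p :=
  hasFDerivAt_fst
lemma hasFDerivAt_y (p : ℝ × ℝ × ℝ) : HasFDerivAt (fun q : ℝ × ℝ × ℝ => q.2.1) pY p :=
  hasFDerivAt_fst.comp p hasFDerivAt_snd
lemma hasFDerivAt_t (p : ℝ × ℝ × ℝ) : HasFDerivAt (fun q : ℝ × ℝ × ℝ => q.2.2) pT p :=
  hasFDerivAt_snd.comp p hasFDerivAt_snd

lemma hasFDerivAt_cosT (p : ℝ × ℝ × ℝ) :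
    HasFDerivAt (fun q : ℝ × ℝ × ℝ => Real.cos q.2.2) ((-Real.sin p.2.2) • pT) p :=
  by have := (Real.hasDerivAt_cos p.2.2).comp_hasFDerivAt p (hasFDerivAt_t p); exact this

lemma hasFDerivAt_sinT (p : ℝ × ℝ × ℝ) :
    HasFDerivAt (fun q : ℝ × ℝ × ℝ => Real.sin q.2.2) ((Real.cos p.2.2) • pT) p :=
  by have := (Real.hasDerivAt_sin p.2.2).comp_hasFDerivAt p (hasFDerivAt_t p); exact this

/-- The spatial fderiv of `Kheat` as a continuous linear map, divided by the value `Kheat p`. -/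
noncomputable def LQ (D11 D22 s : ℝ) (p : ℝ × ℝ × ℝ) : (ℝ × ℝ × ℝ) →L[ℝ] ℝ :=
  (-(p.1 / (2 * D22 * s))) • pX + (-(p.2.1 / (2 * D22 * s))) • pY +
    (-(p.2.2 / (2 * D11 * s))) • pT

@[simp] lemma LQ_apply (D11 D22 s : ℝ) (p v : ℝ × ℝ × ℝ) :
    LQ D11 D22 s p v =
      -(p.1 * v.1 / (2 * D22 * s)) + -(p.2.1 * v.2.1 / (2 * D22 * s)) +
        -(p.2.2 * v.2.2 / (2 * D11 * s)) := by
  simp [LQ]; ring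

lemma hasFDerivAt_Kheat (D11 D22 s : ℝ) (p : ℝ × ℝ × ℝ) :
    HasFDerivAt (Kheat D11 D22 s) (Kheat D11 D22 s p • LQ D11 D22 s p) p := by
  have hQ : HasFDerivAt
      (fun q : ℝ × ℝ × ℝ => -(q.2.2 ^ 2 / D11 + (q.1 ^ 2 + q.2.1 ^ 2) / D22) / (4 * s))
      (LQ D11 D22 s p) p := by
    have hx2 : HasFDerivAt (fun q : ℝ × ℝ × ℝ => q.1 ^ 2) ((p.1 • pX) + (p.1 • pX)) p := by
      simpa [pow_two] using (hasFDerivAt_x p).fun_mul (hasFDerivAt_x p)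
    have hy2 : HasFDerivAt (fun q : ℝ × ℝ × ℝ => q.2.1 ^ 2) ((p.2.1 • pY) + (p.2.1 • pY)) p := by
      simpa [pow_two] using (hasFDerivAt_y p).fun_mul (hasFDerivAt_y p)
    have ht2 : HasFDerivAt (fun q : ℝ × ℝ × ℝ => q.2.2 ^ 2) ((p.2.2 • pT) + (p.2.2 • pT)) p := by
      simpa [pow_two] using (hasFDerivAt_t p).fun_mul (hasFDerivAt_t p)
    have h := (((ht2.const_mul (1/D11)).fun_add ((hx2.fun_add hy2).const_mul (1/D22))).fun_neg.const_mul
      (1/(4*s)))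
    have heq : (fun q : ℝ × ℝ × ℝ =>
        (1/(4*s)) * (-((1/D11) * q.2.2 ^ 2 + (1/D22) * (q.1 ^ 2 + q.2.1 ^ 2)))) =
        (fun q : ℝ × ℝ × ℝ => -(q.2.2 ^ 2 / D11 + (q.1 ^ 2 + q.2.1 ^ 2) / D22) / (4 * s)) := by
      funext q; ring
    rw [heq] at h
    refine h.congr_fderiv ?_
    refine ContinuousLinearMap.ext fun v => ?_
    simp [LQ]
    ring
  have h2 := (hQ.exp).const_mul ((1 / (D22 * Real.sqrt D11)) * (4 * π * s) ^ (-(3 : ℝ) / 2))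
  have heq2 : (fun q : ℝ × ℝ × ℝ => (1 / (D22 * Real.sqrt D11)) * (4 * π * s) ^ (-(3 : ℝ) / 2) *
      Real.exp (-(q.2.2 ^ 2 / D11 + (q.1 ^ 2 + q.2.1 ^ 2) / D22) / (4 * s))) =
      Kheat D11 D22 s := rfl
  rw [heq2] at h2
  refine h2.congr_fderiv ?_
  refine ContinuousLinearMap.ext fun v => ?_
  simp [Kheat, mul_assoc]

lemma Atheta_Kheat (D11 D22 s : ℝ) :
    Atheta (Kheat D11 D22 s) = fun p => Kheat D11 D22 s p * (-(p.2.2 / (2 * D11 * s))) := by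
  funext p
  rw [Atheta, (hasFDerivAt_Kheat D11 D22 s p).fderiv]
  simp

lemma Axi_Kheat (D11 D22 s : ℝ) :
    Axi (Kheat D11 D22 s) = fun p =>
      Kheat D11 D22 s p *
        (-((p.1 * Real.cos p.2.2 + p.2.1 * Real.sin p.2.2) / (2 * D22 * s))) := by
  funext p
  rw [Axi, (hasFDerivAt_Kheat D11 D22 s p).fderiv]
  simp only [ContinuousLinearMap.add_apply, ContinuousLinearMap.smul_apply,
    ContinuousLinearMap.sub_apply, ContinuousLinearMap.neg_apply, LQ_apply, pX_apply, pY_apply,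
    pT_apply, smul_eq_mul]
  ring

lemma Aeta_Kheat (D11 D22 s : ℝ) :
    Aeta (Kheat D11 D22 s) = fun p =>
      Kheat D11 D22 s p *
        ((p.1 * Real.sin p.2.2 - p.2.1 * Real.cos p.2.2) / (2 * D22 * s)) := by
  funext p
  rw [Aeta, (hasFDerivAt_Kheat D11 D22 s p).fderiv]
  simp only [ContinuousLinearMap.add_apply, ContinuousLinearMap.smul_apply,
    ContinuousLinearMap.sub_apply, ContinuousLinearMap.neg_apply, LQ_apply, pX_apply, pY_apply,
    pT_apply, smul_eq_mul]
  ring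

lemma Atheta2_Kheat (D11 D22 s : ℝ) (p : ℝ × ℝ × ℝ) :
    Atheta (Atheta (Kheat D11 D22 s)) p =
      Kheat D11 D22 s p * ((p.2.2 / (2 * D11 * s)) ^ 2 - 1 / (2 * D11 * s)) := by
  rw [Atheta_Kheat]
  have hg : HasFDerivAt (fun q : ℝ × ℝ × ℝ => -(q.2.2 / (2 * D11 * s)))
      ((-(1 / (2 * D11 * s))) • pT) p := by
    have h := ((hasFDerivAt_t p).const_mul (1 / (2 * D11 * s))).fun_neg
    have heq : (fun q : ℝ × ℝ × ℝ => -(1 / (2 * D11 * s) * q.2.2)) =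
        fun q : ℝ × ℝ × ℝ => -(q.2.2 / (2 * D11 * s)) := by funext q; ring
    rw [heq] at h
    refine h.congr_fderiv ?_
    refine ContinuousLinearMap.ext fun v => ?_
    simp
  have hprod := (hasFDerivAt_Kheat D11 D22 s p).fun_mul hg
  rw [Atheta, hprod.fderiv]
  simp only [ContinuousLinearMap.add_apply, ContinuousLinearMap.smul_apply,
    ContinuousLinearMap.sub_apply, ContinuousLinearMap.neg_apply, LQ_apply, pX_apply, pY_apply,
    pT_apply, smul_eq_mul]
  ring

lemma Axi2_Kheat (D11 D22 s : ℝ) (p : ℝ × ℝ × ℝ) :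
    Axi (Axi (Kheat D11 D22 s)) p =
      Kheat D11 D22 s p *
        (((p.1 * Real.cos p.2.2 + p.2.1 * Real.sin p.2.2) / (2 * D22 * s)) ^ 2
          - (Real.cos p.2.2 ^ 2 + Real.sin p.2.2 ^ 2) / (2 * D22 * s)) := by
  rw [Axi_Kheat]
  have hg : HasFDerivAt
      (fun q : ℝ × ℝ × ℝ => -((q.1 * Real.cos q.2.2 + q.2.1 * Real.sin q.2.2) / (2 * D22 * s)))
      ((-(1 / (2 * D22 * s))) •
        ((p.1 • ((-Real.sin p.2.2) • pT) + Real.cos p.2.2 • pX) +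
          (p.2.1 • ((Real.cos p.2.2) • pT) + Real.sin p.2.2 • pY))) p := by
    have ha := (hasFDerivAt_x p).fun_mul (hasFDerivAt_cosT p)
    have hb := (hasFDerivAt_y p).fun_mul (hasFDerivAt_sinT p)
    have h := ((ha.fun_add hb).const_mul (1 / (2 * D22 * s))).fun_neg
    have heq : (fun q : ℝ × ℝ × ℝ =>
        -(1 / (2 * D22 * s) * (q.1 * Real.cos q.2.2 + q.2.1 * Real.sin q.2.2))) =
        fun q : ℝ × ℝ × ℝ =>
          -((q.1 * Real.cos q.2.2 + q.2.1 * Real.sin q.2.2) / (2 * D22 * s)) := by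
      funext q; ring
    rw [heq] at h
    refine h.congr_fderiv ?_
    module
  have hprod := (hasFDerivAt_Kheat D11 D22 s p).fun_mul hg
  rw [Axi, hprod.fderiv]
  simp only [ContinuousLinearMap.add_apply, ContinuousLinearMap.smul_apply,
    ContinuousLinearMap.sub_apply, ContinuousLinearMap.neg_apply, LQ_apply, pX_apply, pY_apply,
    pT_apply, smul_eq_mul]
  ring

lemma Aeta2_Kheat (D11 D22 s : ℝ) (p : ℝ × ℝ × ℝ) :
    Aeta (Aeta (Kheat D11 D22 s)) p =
      Kheat D11 D22 s p *
        (((p.1 * Real.sin p.2.2 - p.2.1 * Real.cos p.2.2) / (2 * D22 * s)) ^ 2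
          - (Real.sin p.2.2 ^ 2 + Real.cos p.2.2 ^ 2) / (2 * D22 * s)) := by
  rw [Aeta_Kheat]
  have hg : HasFDerivAt
      (fun q : ℝ × ℝ × ℝ => (q.1 * Real.sin q.2.2 - q.2.1 * Real.cos q.2.2) / (2 * D22 * s))
      ((1 / (2 * D22 * s)) •
        ((p.1 • ((Real.cos p.2.2) • pT) + Real.sin p.2.2 • pX) -
          (p.2.1 • ((-Real.sin p.2.2) • pT) + Real.cos p.2.2 • pY))) p := by
    have ha := (hasFDerivAt_x p).fun_mul (hasFDerivAt_sinT p)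
    have hb := (hasFDerivAt_y p).fun_mul (hasFDerivAt_cosT p)
    have h := ((ha.fun_sub hb).const_mul (1 / (2 * D22 * s)))
    have heq : (fun q : ℝ × ℝ × ℝ =>
        1 / (2 * D22 * s) * (q.1 * Real.sin q.2.2 - q.2.1 * Real.cos q.2.2)) =
        fun q : ℝ × ℝ × ℝ =>
          (q.1 * Real.sin q.2.2 - q.2.1 * Real.cos q.2.2) / (2 * D22 * s) := by
      funext q; ring
    rw [heq] at h
    exact h
  have hprod := (hasFDerivAt_Kheat D11 D22 s p).fun_mul hg
  rw [Aeta, hprod.fderiv]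
  simp only [ContinuousLinearMap.add_apply, ContinuousLinearMap.smul_apply,
    ContinuousLinearMap.sub_apply, ContinuousLinearMap.neg_apply, LQ_apply, pX_apply, pY_apply,
    pT_apply, smul_eq_mul]
  ring

lemma hasDerivAt_time (D11 D22 s : ℝ) (hs : 0 < s) (p : ℝ × ℝ × ℝ) :
    HasDerivAt (fun t => Kheat D11 D22 t p)
      (Kheat D11 D22 s p *
        ((p.2.2 ^ 2 / D11 + (p.1 ^ 2 + p.2.1 ^ 2) / D22) / (4 * s ^ 2) - 3 / (2 * s))) s := by
  have hA : 0 < 4 * π * s := by positivity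
  set N : ℝ := -(p.2.2 ^ 2 / D11 + (p.1 ^ 2 + p.2.1 ^ 2) / D22) with hN
  have hinner1 : HasDerivAt (fun t : ℝ => 4 * π * t) (4 * π) s := by
    simpa using (hasDerivAt_id s).const_mul (4 * π)
  have h1 : HasDerivAt (fun t : ℝ => (4 * π * t) ^ (-(3 : ℝ) / 2))
      ((-(3 : ℝ) / 2 * (4 * π * s) ^ (-(3 : ℝ) / 2 - 1)) * (4 * π)) s :=
    (Real.hasDerivAt_rpow_const (p := (-(3 : ℝ) / 2)) (Or.inl hA.ne')).comp s hinner1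
  have hinner2 : HasDerivAt (fun t : ℝ => 4 * t) (4 : ℝ) s := by
    simpa using (hasDerivAt_id s).const_mul (4 : ℝ)
  have h2 : HasDerivAt (fun t : ℝ => Real.exp (N / (4 * t)))
      (Real.exp (N / (4 * s)) * ((0 * (4 * s) - N * 4) / (4 * s) ^ 2)) s :=
    (((hasDerivAt_const s N).div hinner2 (by positivity)).exp)
  have h3 := (h1.fun_mul h2).const_mul (1 / (D22 * Real.sqrt D11))
  have heq : (fun t : ℝ => 1 / (D22 * Real.sqrt D11) *
      ((4 * π * t) ^ (-(3 : ℝ) / 2) * Real.exp (N / (4 * t)))) =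
      fun t => Kheat D11 D22 t p := by
    funext t; rw [Kheat]; ring
  rw [heq] at h3
  refine h3.congr_deriv ?_
  have hrpow : (4 * π * s) ^ (-(3 : ℝ) / 2 - 1) =
      (4 * π * s) ^ (-(3 : ℝ) / 2) / (4 * π * s) := by
    rw [Real.rpow_sub hA, Real.rpow_one]
  have hval : (-(3 : ℝ) / 2 * (4 * π * s) ^ (-(3 : ℝ) / 2 - 1)) * (4 * π) =
      -(3 : ℝ) / 2 * (4 * π * s) ^ (-(3 : ℝ) / 2) / s := by
    rw [hrpow]
    have hπ := Real.pi_ne_zero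
    field_simp
  rw [hval, Kheat, hN]
  ring

lemma integral_Kheat (D11 D22 s : ℝ) (h11 : 0 < D11) (h22 : 0 < D22) (hs : 0 < s) :
    ∫ p : ℝ × ℝ × ℝ, Kheat D11 D22 s p = 1 := by
  have hA : 0 < 4 * π * s := by positivity
  have hfact : ∀ p : ℝ × ℝ × ℝ, Kheat D11 D22 s p =
      (1 / (D22 * Real.sqrt D11) * (4 * π * s) ^ (-(3 : ℝ) / 2)) *
        (Real.exp (-(1 / (4 * s * D22)) * p.1 ^ 2) *
          (Real.exp (-(1 / (4 * s * D22)) * p.2.1 ^ 2) *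
            Real.exp (-(1 / (4 * s * D11)) * p.2.2 ^ 2))) := by
    intro p
    rw [Kheat, ← Real.exp_add, ← Real.exp_add]
    congr 1
    field_simp
    ring
  simp_rw [hfact]
  rw [MeasureTheory.integral_const_mul, Measure.volume_eq_prod,
    MeasureTheory.integral_prod_mul (f := fun x : ℝ => Real.exp (-(1 / (4 * s * D22)) * x ^ 2))
      (g := fun w : ℝ × ℝ => Real.exp (-(1 / (4 * s * D22)) * w.1 ^ 2) *
        Real.exp (-(1 / (4 * s * D11)) * w.2 ^ 2)),
    Measure.volume_eq_prod,
    MeasureTheory.integral_prod_mul (f := fun x : ℝ => Real.exp (-(1 / (4 * s * D22)) * x ^ 2))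
      (g := fun x : ℝ => Real.exp (-(1 / (4 * s * D11)) * x ^ 2)),
    integral_gaussian, integral_gaussian]
  have e0 : π / (1 / (4 * s * D22)) = 4 * π * s * D22 := by field_simp
  have e0' : π / (1 / (4 * s * D11)) = 4 * π * s * D11 := by field_simp
  rw [e0, e0']
  have e1 : Real.sqrt (4 * π * s * D22) * Real.sqrt (4 * π * s * D22) = 4 * π * s * D22 :=
    Real.mul_self_sqrt (by positivity)
  have e2 : Real.sqrt (4 * π * s * D11) = Real.sqrt (4 * π * s) * Real.sqrt D11 :=
    Real.sqrt_mul (by positivity) _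
  have e3 : (4 * π * s) ^ (-(3 : ℝ) / 2) * ((4 * π * s) * Real.sqrt (4 * π * s)) = 1 := by
    have : (4 * π * s) * Real.sqrt (4 * π * s) = (4 * π * s) ^ ((3 : ℝ) / 2) := by
      rw [show ((3 : ℝ) / 2) = 1 + 1 / 2 by norm_num, Real.rpow_add hA, Real.rpow_one,
        ← Real.sqrt_eq_rpow]
    rw [this, ← Real.rpow_add hA]
    norm_num
  have hsq11 : (0:ℝ) < Real.sqrt D11 := Real.sqrt_pos.mpr h11
  have hsqA : (0:ℝ) < Real.sqrt (4 * π * s) := Real.sqrt_pos.mpr hA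
  calc 1 / (D22 * Real.sqrt D11) * (4 * π * s) ^ (-(3 : ℝ) / 2) *
        (Real.sqrt (4 * π * s * D22) * (Real.sqrt (4 * π * s * D22) * Real.sqrt (4 * π * s * D11)))
      = 1 / (D22 * Real.sqrt D11) *
          ((4 * π * s) ^ (-(3 : ℝ) / 2) * ((4 * π * s) * Real.sqrt (4 * π * s))) *
          (D22 * Real.sqrt D11) := by
        rw [e2, ← mul_assoc (Real.sqrt (4 * π * s * D22)), e1]; ring
    _ = 1 := by rw [e3]; field_simp

lemma contDiffOn_Kheat (D11 D22 : ℝ) :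
    ContDiffOn ℝ ∞ (fun q : (ℝ × ℝ × ℝ) × ℝ => Kheat D11 D22 q.2 q.1)
      (Set.univ ×ˢ Set.Ioi (0 : ℝ)) := by
  intro q hq
  have hs : 0 < q.2 := hq.2
  apply ContDiffAt.contDiffWithinAt
  have h1 : ContDiffAt ℝ ∞ (fun q : (ℝ × ℝ × ℝ) × ℝ => (4 * π * q.2) ^ (-(3 : ℝ) / 2)) q :=
    (Real.contDiffAt_rpow_const_of_ne
      (by positivity : (0:ℝ) < 4 * π * q.2).ne').comp q
      (contDiffAt_const.mul contDiffAt_snd)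
  have c1 : ContDiffAt ℝ ∞ (fun q : (ℝ × ℝ × ℝ) × ℝ => q.1.1) q :=
    contDiffAt_fst.comp q contDiffAt_fst
  have c2 : ContDiffAt ℝ ∞ (fun q : (ℝ × ℝ × ℝ) × ℝ => q.1.2.1) q :=
    contDiffAt_fst.comp q (contDiffAt_snd.comp q contDiffAt_fst)
  have c3 : ContDiffAt ℝ ∞ (fun q : (ℝ × ℝ × ℝ) × ℝ => q.1.2.2) q :=
    contDiffAt_snd.comp q (contDiffAt_snd.comp q contDiffAt_fst)
  have hnum : ContDiffAt ℝ ∞ (fun q : (ℝ × ℝ × ℝ) × ℝ =>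
      -(q.1.2.2 ^ 2 / D11 + (q.1.1 ^ 2 + q.1.2.1 ^ 2) / D22)) q :=
    (((c3.pow 2).div_const D11).add (((c1.pow 2).add (c2.pow 2)).div_const D22)).neg
  have hden : ContDiffAt ℝ ∞ (fun q : (ℝ × ℝ × ℝ) × ℝ => 4 * q.2) q :=
    contDiffAt_const.mul contDiffAt_snd
  have h2 : ContDiffAt ℝ ∞ (fun q : (ℝ × ℝ × ℝ) × ℝ =>
      Real.exp (-(q.1.2.2 ^ 2 / D11 + (q.1.1 ^ 2 + q.1.2.1 ^ 2) / D22) / (4 * q.2))) q :=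
    (Real.contDiff_exp.contDiffAt).comp q (hnum.div hden (by positivity))
  simp only [Kheat]
  exact (contDiffAt_const.mul h1).mul h2

theorem stmt_8 (D11 D22 : ℝ) (h11 : 0 < D11) (h22 : 0 < D22) :
    ContDiffOn ℝ ∞ (fun q : (ℝ × ℝ × ℝ) × ℝ => Kheat D11 D22 q.2 q.1)
      (Set.univ ×ˢ Set.Ioi (0 : ℝ)) ∧
    (∀ s : ℝ, 0 < s → ∀ p : ℝ × ℝ × ℝ,
      HasDerivAt (fun t => Kheat D11 D22 t p)
        (D11 * Atheta (Atheta (Kheat D11 D22 s)) p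
          + D22 * (Axi (Axi (Kheat D11 D22 s)) p + Aeta (Aeta (Kheat D11 D22 s)) p)) s) ∧
    (∀ s : ℝ, 0 < s → ∫ p : ℝ × ℝ × ℝ, Kheat D11 D22 s p = 1) := by
  refine ⟨contDiffOn_Kheat D11 D22, fun s hs p => ?_,
    fun s hs => integral_Kheat D11 D22 s h11 h22 hs⟩
  have hsc := Real.sin_sq_add_cos_sq p.2.2
  have hsc' := Real.cos_sq_add_sin_sq p.2.2
  rw [Atheta2_Kheat, Axi2_Kheat, Aeta2_Kheat, hsc, hsc']
  have htime := hasDerivAt_time D11 D22 s hs p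
  have hxy : p.1 ^ 2 + p.2.1 ^ 2 =
      (p.1 * Real.cos p.2.2 + p.2.1 * Real.sin p.2.2) ^ 2 +
        (p.1 * Real.sin p.2.2 - p.2.1 * Real.cos p.2.2) ^ 2 := by
    linear_combination (-(p.1 ^ 2 + p.2.1 ^ 2)) * hsc
  rw [hxy] at htime
  convert htime using 1
  have hne11 := h11.ne'
  have hne22 := h22.ne'
  have hnes := hs.ne'
  field_simp
  ring
end

section
/- Let α, D₁₁, D₂₂ > 0. For (x, y, θ) ∈ ℝ³ with (x, y, θ) ≠ (0, 0, 0), set ρ = √(θ²/D₁₁ + (x² + y²)/D₂₂). Then the resolvent kernel of the contour-enhancement process with D₂₂ = D₃₃ has the closed form α ∫₀^∞ K_s(x, y, θ) e^{−αs} ds = (α/(4π · D₂₂ · √D₁₁)) · e^{−√α · ρ}/ρ, and this function R satisfies the resolvent equation (α − D₁₁ ∂²/∂θ² − D₂₂(∂²/∂x² + ∂²/∂y²)) R = 0 at every point (x, y, θ) ≠ (0, 0, 0). -/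
/-!
STATEMENT 9: For α, D₁₁, D₂₂ > 0 and (x,y,θ) ≠ (0,0,0), with
ρ = √(θ²/D₁₁ + (x²+y²)/D₂₂), the resolvent kernel of the contour-enhancement process
(case D₂₂ = D₃₃) has the closed form
α ∫₀^∞ K_s(x,y,θ) e^{−αs} ds = (α/(4π D₂₂ √D₁₁)) e^{−√α ρ}/ρ,
and this function R satisfies (α − D₁₁ ∂²/∂θ² − D₂₂(∂²/∂x² + ∂²/∂y²)) R = 0 away
from the origin.  Points are written p = (x, y, θ) : ℝ × ℝ × ℝ.
-/

open Real MeasureTheory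

/-- `ρ(x,y,θ) = √(θ²/D₁₁ + (x²+y²)/D₂₂)`. -/
noncomputable def rho (D11 D22 : ℝ) (p : ℝ × ℝ × ℝ) : ℝ :=
  Real.sqrt (p.2.2 ^ 2 / D11 + (p.1 ^ 2 + p.2.1 ^ 2) / D22)

/-- The closed-form resolvent kernel `(α/(4π D₂₂ √D₁₁)) e^{−√α ρ}/ρ`. -/
noncomputable def Rres (α D11 D22 : ℝ) (p : ℝ × ℝ × ℝ) : ℝ :=
  α / (4 * π * D22 * Real.sqrt D11) * Real.exp (-Real.sqrt α * rho D11 D22 p)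
    / rho D11 D22 p

lemma f1_image (a b : ℝ) (ha : 0 < a) (hb : 0 < b) :
    (fun u => b*u - a/u) '' Set.Ioi 0 = Set.univ := by
  apply Set.eq_univ_of_forall
  intro v
  set w := Real.sqrt (v^2 + 4*a*b) with hw
  have hw2 : w^2 = v^2 + 4*a*b := Real.sq_sqrt (by positivity)
  have hwv : |v| < w := by
    rw [← Real.sqrt_sq_eq_abs]; exact Real.sqrt_lt_sqrt (by positivity) (by nlinarith)
  have hv : -v ≤ |v| := neg_le_abs v
  have hu : 0 < (v + w)/(2*b) := div_pos (by linarith) (by linarith)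
  refine ⟨(v+w)/(2*b), hu, ?_⟩
  have hvw : 0 < v + w := by linarith
  have hne : (v+w)/(2*b) ≠ 0 := ne_of_gt hu
  field_simp [hvw.ne']
  nlinarith [hw2]

lemma f1_mono (a b : ℝ) (ha : 0 < a) (hb : 0 < b) :
    Set.InjOn (fun u => b*u - a/u) (Set.Ioi 0) := by
  apply StrictMonoOn.injOn
  intro x hx y hy hxy
  simp only
  have h1 : a/y < a/x := div_lt_div_of_pos_left ha hx hxy
  have h2 : b*x < b*y := by nlinarith
  linarith

lemma f1_deriv (a b u : ℝ) (hu : 0 < u) :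
    HasDerivWithinAt (fun u => b*u - a/u) (b + a/u^2) (Set.Ioi 0) u := by
  have h : HasDerivAt (fun u : ℝ => b*u - a/u) (b + a/u^2) u := by
    have h1 : HasDerivAt (fun u : ℝ => a * u⁻¹) (a * (-(u^2)⁻¹)) u :=
      (hasDerivAt_inv hu.ne').const_mul a
    have h2 : HasDerivAt (fun u : ℝ => b * u) (b * 1) u := (hasDerivAt_id u).const_mul b
    have := h2.sub h1
    simp only [div_eq_mul_inv]
    refine HasDerivAt.congr_deriv this (Eq.symm ?_)
    ring
  exact h.hasDerivWithinAt

lemma J1 (a b : ℝ) (ha : 0 < a) (hb : 0 < b) :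
    ∫ u in Set.Ioi (0:ℝ), (b + a/u^2) * Real.exp (-(b*u - a/u)^2) = Real.sqrt π := by
  have key := integral_image_eq_integral_abs_deriv_smul (f' := fun u => b + a/u^2)
    measurableSet_Ioi (fun u hu => f1_deriv a b u hu) (f1_mono a b ha hb)
    (fun v => Real.exp (-v^2))
  rw [f1_image a b ha hb] at key
  rw [Measure.restrict_univ] at key
  have hg : (∫ v : ℝ, Real.exp (-v^2)) = Real.sqrt π := by
    have := integral_gaussian (1:ℝ)
    simpa using this
  rw [hg] at key
  rw [key]
  apply setIntegral_congr_fun measurableSet_Ioi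
  intro u hu
  have hu' : (0:ℝ) < u := hu
  have : |b + a/u^2| = b + a/u^2 := abs_of_pos (by positivity)
  simp [this, smul_eq_mul]

lemma int1 (a b : ℝ) (ha : 0 < a) (hb : 0 < b) :
    IntegrableOn (fun u => (b + a/u^2) * Real.exp (-(b*u - a/u)^2)) (Set.Ioi (0:ℝ)) := by
  have key := (integrableOn_image_iff_integrableOn_abs_deriv_smul (f' := fun u => b + a/u^2)
    measurableSet_Ioi (fun u hu => f1_deriv a b u hu) (f1_mono a b ha hb)
    (fun v => Real.exp (-v^2))).mp ?_
  · apply key.congr_fun ?_ measurableSet_Ioi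
    intro u hu
    have hu' : (0:ℝ) < u := hu
    have : |b + a/u^2| = b + a/u^2 := abs_of_pos (by positivity)
    simp [this, smul_eq_mul]
  · rw [f1_image a b ha hb]
    have : Integrable (fun v : ℝ => Real.exp (-v^2)) := by
      have := integrable_exp_neg_mul_sq (b := (1:ℝ)) one_pos
      simpa using this
    exact this.integrableOn

lemma f2_image (a b : ℝ) (ha : 0 < a) (hb : 0 < b) :
    (fun u => a/(b*u)) '' Set.Ioi 0 = Set.Ioi 0 := by
  ext v
  constructor
  · rintro ⟨u, hu, rfl⟩
    have hu' : (0:ℝ) < u := hu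
    exact div_pos ha (by positivity)
  · intro hv
    have hv' : (0:ℝ) < v := hv
    refine ⟨a/(b*v), div_pos ha (by positivity), ?_⟩
    field_simp

lemma f2_inj (a b : ℝ) (ha : 0 < a) (hb : 0 < b) :
    Set.InjOn (fun u => a/(b*u)) (Set.Ioi 0) := by
  intro x hx y hy h
  have hx' : (0:ℝ) < x := hx
  have hy' : (0:ℝ) < y := hy
  field_simp at h
  exact h.symm

lemma f2_deriv (a b u : ℝ) (hb : 0 < b) (hu : 0 < u) :
    HasDerivWithinAt (fun u => a/(b*u)) (-(a/(b*u^2))) (Set.Ioi 0) u := by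
  have h1 : HasDerivAt (fun u : ℝ => (a/b) * u⁻¹) ((a/b) * (-(u^2)⁻¹)) u :=
    (hasDerivAt_inv hu.ne').const_mul (a/b)
  have hfun : (fun u : ℝ => a/(b*u)) = fun u : ℝ => (a/b) * u⁻¹ := by
    funext u; rw [div_mul_eq_div_div, div_eq_mul_inv]
  have hval : -(a/(b*u^2)) = (a/b) * (-(u^2)⁻¹) := by field_simp
  rw [hfun, hval]
  exact h1.hasDerivWithinAt

lemma J2 (a b : ℝ) (ha : 0 < a) (hb : 0 < b) :
    ∫ u in Set.Ioi (0:ℝ), (b - a/u^2) * Real.exp (-(b*u - a/u)^2) = 0 := by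
  set g : ℝ → ℝ := fun x => (b - a/x^2) * Real.exp (-(b*x - a/x)^2) with hg
  have key := integral_image_eq_integral_abs_deriv_smul (f' := fun u => -(a/(b*u^2)))
    measurableSet_Ioi (fun u hu => f2_deriv a b u hb hu) (f2_inj a b ha hb) g
  rw [f2_image a b ha hb] at key
  have : ∫ u in Set.Ioi (0:ℝ), |(-(a/(b*u^2)))| • g (a/(b*u)) = - ∫ u in Set.Ioi (0:ℝ), g u := by
    rw [← integral_neg]
    apply setIntegral_congr_fun measurableSet_Ioi
    intro u hu
    have hu' : (0:ℝ) < u := hu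
    show |(-(a/(b*u^2)))| • g (a/(b*u)) = -g u
    have habs : |(-(a/(b*u^2)))| = a/(b*u^2) := by
      rw [abs_neg, abs_of_pos (by positivity)]
    rw [habs, smul_eq_mul, hg]
    simp only
    have harg : (b*(a/(b*u)) - a/(a/(b*u)))^2 = (b*u - a/u)^2 := by
      have h1 : b*(a/(b*u)) = a/u := by field_simp
      have h2 : a/(a/(b*u)) = b*u := by
        rw [div_div_eq_mul_div, mul_comm, mul_div_assoc, div_self ha.ne', mul_one]
      rw [h1, h2]; ring
    rw [harg]
    have hfac : a/(b*u^2) * (b - a/(a/(b*u))^2) = -(b - a/u^2) := by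
      have h2 : a/(b*u) ≠ 0 := by positivity
      field_simp
      ring
    rw [← mul_assoc, hfac]
    ring
  rw [this] at key
  linarith [key]

lemma int2 (a b : ℝ) (ha : 0 < a) (hb : 0 < b) :
    IntegrableOn (fun u => (b - a/u^2) * Real.exp (-(b*u - a/u)^2)) (Set.Ioi (0:ℝ)) := by
  apply Integrable.mono (int1 a b ha hb)
  · apply Measurable.aestronglyMeasurable
    fun_prop
  · rw [ae_restrict_iff' measurableSet_Ioi]
    filter_upwards with u
    intro hu
    have hu' : (0:ℝ) < u := hu
    have he : (0:ℝ) < Real.exp (-(b*u - a/u)^2) := Real.exp_pos _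
    simp only [Real.norm_eq_abs]
    rw [abs_mul, abs_mul]
    apply mul_le_mul_of_nonneg_right _ (abs_nonneg _)
    rw [abs_of_pos (by positivity : (0:ℝ) < b + a/u^2)]
    calc |b - a/u^2| ≤ |b| + |a/u^2| := abs_sub b (a/u^2)
    _ = b + a/u^2 := by rw [abs_of_pos hb, abs_of_pos (by positivity)]

lemma glasser (a b : ℝ) (ha : 0 < a) (hb : 0 < b) :
    ∫ u in Set.Ioi (0:ℝ), Real.exp (-(b*u - a/u)^2) = Real.sqrt π / (2*b) := by
  have hsum : ∫ u in Set.Ioi (0:ℝ),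
      ((b + a/u^2) * Real.exp (-(b*u - a/u)^2) + (b - a/u^2) * Real.exp (-(b*u - a/u)^2))
      = Real.sqrt π := by
    rw [integral_add (int1 a b ha hb) (int2 a b ha hb), J1 a b ha hb, J2 a b ha hb, add_zero]
  have h2 : ∫ u in Set.Ioi (0:ℝ),
      ((b + a/u^2) * Real.exp (-(b*u - a/u)^2) + (b - a/u^2) * Real.exp (-(b*u - a/u)^2))
      = 2*b * ∫ u in Set.Ioi (0:ℝ), Real.exp (-(b*u - a/u)^2) := by
    rw [← MeasureTheory.integral_const_mul]
    congr 1; funext u; ring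
  rw [h2] at hsum
  field_simp at hsum ⊢
  linarith

lemma lemB (a b : ℝ) (ha : 0 < a) (hb : 0 < b) :
    ∫ u in Set.Ioi (0:ℝ), Real.exp (-(b^2*u^2 + a^2/u^2))
      = Real.sqrt π / (2*b) * Real.exp (-(2*a*b)) := by
  have : ∫ u in Set.Ioi (0:ℝ), Real.exp (-(b^2*u^2 + a^2/u^2))
      = ∫ u in Set.Ioi (0:ℝ), Real.exp (-(2*a*b)) * Real.exp (-(b*u - a/u)^2) := by
    apply setIntegral_congr_fun measurableSet_Ioi
    intro u hu
    have hu' : (0:ℝ) < u := hu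
    show Real.exp (-(b^2*u^2 + a^2/u^2)) = Real.exp (-(2*a*b)) * Real.exp (-(b*u - a/u)^2)
    rw [← Real.exp_add]
    congr 1
    field_simp
    ring
  rw [this, MeasureTheory.integral_const_mul, glasser a b ha hb]
  ring

lemma f3_image : (fun u : ℝ => 1/u^2) '' Set.Ioi 0 = Set.Ioi 0 := by
  ext v
  constructor
  · rintro ⟨u, hu, rfl⟩
    have hu' : (0:ℝ) < u := hu
    exact Set.mem_Ioi.mpr (by positivity)
  · intro hv
    have hv' : (0:ℝ) < v := hv
    refine ⟨1/Real.sqrt v, Set.mem_Ioi.mpr (by positivity), ?_⟩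
    simp only
    rw [div_pow, one_pow, Real.sq_sqrt hv'.le]
    rw [one_div_one_div]

lemma f3_inj : Set.InjOn (fun u : ℝ => 1/u^2) (Set.Ioi 0) := by
  intro x hx y hy h
  have hx' : (0:ℝ) < x := hx
  have hy' : (0:ℝ) < y := hy
  simp only [one_div] at h
  have h2 : x^2 = y^2 := by
    have := congrArg (·⁻¹) h
    simpa using this
  nlinarith

lemma f3_deriv (u : ℝ) (hu : 0 < u) :
    HasDerivWithinAt (fun u : ℝ => 1/u^2) (-(2/u^3)) (Set.Ioi 0) u := by
  have h1 : HasDerivAt (fun u : ℝ => (u^2)⁻¹) (-(2*u) / (u^2)^2) u := by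
    have := (hasDerivAt_pow 2 u).inv (by positivity)
    simp at this; exact this
  have hfun : (fun u : ℝ => 1/u^2) = fun u : ℝ => (u^2)⁻¹ := by
    funext u; rw [one_div]
  have hval : -(2/u^3) = -(2*u) / (u^2)^2 := by
    field_simp
  rw [hfun, hval]
  exact h1.hasDerivWithinAt

lemma lemC (c α : ℝ) (hc : 0 < c) (hα : 0 < α) :
    ∫ s in Set.Ioi (0:ℝ), (s * Real.sqrt s)⁻¹ * Real.exp (-(c/s + α*s))
      = Real.sqrt (π/c) * Real.exp (-(2*Real.sqrt (α*c))) := by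
  set g : ℝ → ℝ := fun s => (s * Real.sqrt s)⁻¹ * Real.exp (-(c/s + α*s)) with hgdef
  have key := integral_image_eq_integral_abs_deriv_smul (f' := fun u => -(2/u^3))
    measurableSet_Ioi (fun u hu => f3_deriv u hu) f3_inj g
  rw [f3_image] at key
  have hrhs : ∫ u in Set.Ioi (0:ℝ), |(-(2/u^3))| • g (1/u^2)
      = ∫ u in Set.Ioi (0:ℝ), 2 * Real.exp (-((Real.sqrt c)^2*u^2 + (Real.sqrt α)^2/u^2)) := by
    apply setIntegral_congr_fun measurableSet_Ioi
    intro u hu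
    have hu' : (0:ℝ) < u := hu
    show |(-(2/u^3))| • g (1/u^2) = 2 * Real.exp (-((Real.sqrt c)^2*u^2 + (Real.sqrt α)^2/u^2))
    have habs : |(-(2/u^3))| = 2/u^3 := by rw [abs_neg, abs_of_pos (by positivity)]
    rw [habs, smul_eq_mul, hgdef]
    simp only
    have hsq : Real.sqrt (1/u^2) = 1/u := by
      rw [one_div, Real.sqrt_inv, Real.sqrt_sq hu'.le, one_div]
    rw [hsq, Real.sq_sqrt hc.le, Real.sq_sqrt hα.le]
    have h1 : ((1:ℝ)/u^2 * (1/u))⁻¹ = u^3 := by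
      field_simp
    rw [h1]
    have h2 : c/(1/u^2) = c*u^2 := by field_simp
    have h3 : α*(1/u^2) = α/u^2 := by field_simp
    rw [h2, h3]
    field_simp
  rw [hrhs] at key
  rw [MeasureTheory.integral_const_mul, lemB (Real.sqrt α) (Real.sqrt c)
    (Real.sqrt_pos.mpr hα) (Real.sqrt_pos.mpr hc)] at key
  rw [hgdef] at key
  rw [key]
  rw [Real.sqrt_div pi_nonneg c, Real.sqrt_mul hα.le c]
  ring_nf

noncomputable def Ffun (C k t : ℝ) : ℝ := C * Real.exp (-k * Real.sqrt t) / Real.sqrt t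

noncomputable def F1 (C k t : ℝ) : ℝ :=
  -(C * Real.exp (-k * Real.sqrt t) * (k * Real.sqrt t + 1) / (2 * t * Real.sqrt t))

noncomputable def F2 (C k t : ℝ) : ℝ :=
  C * Real.exp (-k * Real.sqrt t) * (k^2*t + 3*k*Real.sqrt t + 3) / (4 * t^2 * Real.sqrt t)

lemma hasDerivAt_Ffun (C k t : ℝ) (ht : 0 < t) :
    HasDerivAt (fun t => Ffun C k t) (F1 C k t) t := by
  have hs : 0 < Real.sqrt t := Real.sqrt_pos.mpr ht
  have hs2 : Real.sqrt t ^ 2 = t := Real.sq_sqrt ht.le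
  have h1 : HasDerivAt Real.sqrt (1/(2*Real.sqrt t)) t := Real.hasDerivAt_sqrt ht.ne'
  have h2 : HasDerivAt (fun t => Real.exp (-k * Real.sqrt t))
      (Real.exp (-k * Real.sqrt t) * (-k * (1/(2*Real.sqrt t)))) t :=
    (h1.const_mul (-k)).exp
  have h3 := (h2.const_mul C).div h1 hs.ne'
  refine HasDerivAt.congr_deriv h3 (Eq.symm ?_)
  rw [F1, ← hs2]
  rw [Real.sqrt_sq hs.le]
  field_simp
  ring

lemma hasDerivAt_F1 (C k t : ℝ) (ht : 0 < t) :
    HasDerivAt (fun t => F1 C k t) (F2 C k t) t := by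
  have hs : 0 < Real.sqrt t := Real.sqrt_pos.mpr ht
  have hs2 : Real.sqrt t ^ 2 = t := Real.sq_sqrt ht.le
  have h1 : HasDerivAt Real.sqrt (1/(2*Real.sqrt t)) t := Real.hasDerivAt_sqrt ht.ne'
  have h2 : HasDerivAt (fun t => Real.exp (-k * Real.sqrt t))
      (Real.exp (-k * Real.sqrt t) * (-k * (1/(2*Real.sqrt t)))) t :=
    (h1.const_mul (-k)).exp
  have ha : HasDerivAt (fun t => k * Real.sqrt t + 1) (k * (1/(2*Real.sqrt t))) t := by
    simpa using (h1.const_mul k).add_const 1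
  have hnum := (h2.const_mul C).mul ha
  have hb : HasDerivAt (fun t : ℝ => 2 * t) 2 t := by
    simpa using (hasDerivAt_id t).const_mul 2
  have hden := hb.mul h1
  have hden_ne : 2 * t * Real.sqrt t ≠ 0 := by positivity
  have h3 := hnum.div hden hden_ne
  have h4 := h3.neg
  refine HasDerivAt.congr_deriv h4 (Eq.symm ?_)
  simp only [Pi.mul_apply]
  rw [F2]
  set sq := Real.sqrt t with hsdef
  rw [← hs2]
  have hsq : (0:ℝ) < sq := hs
  field_simp
  ring

noncomputable def uu (D11 D22 : ℝ) (q : ℝ × ℝ × ℝ) : ℝ :=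
  q.2.2 ^ 2 / D11 + (q.1 ^ 2 + q.2.1 ^ 2) / D22

noncomputable def pr1 : ℝ × ℝ × ℝ →L[ℝ] ℝ := ContinuousLinearMap.fst ℝ ℝ (ℝ × ℝ)
noncomputable def pr2 : ℝ × ℝ × ℝ →L[ℝ] ℝ :=
  (ContinuousLinearMap.fst ℝ ℝ ℝ).comp (ContinuousLinearMap.snd ℝ ℝ (ℝ × ℝ))
noncomputable def pr3 : ℝ × ℝ × ℝ →L[ℝ] ℝ :=
  (ContinuousLinearMap.snd ℝ ℝ ℝ).comp (ContinuousLinearMap.snd ℝ ℝ (ℝ × ℝ))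

noncomputable def Duu (D11 D22 : ℝ) (q : ℝ × ℝ × ℝ) : ℝ × ℝ × ℝ →L[ℝ] ℝ :=
  (2*q.1/D22) • pr1 + (2*q.2.1/D22) • pr2 + (2*q.2.2/D11) • pr3

lemma Duu_apply (D11 D22 : ℝ) (q v : ℝ × ℝ × ℝ) :
    Duu D11 D22 q v = 2*q.1*v.1/D22 + 2*q.2.1*v.2.1/D22 + 2*q.2.2*v.2.2/D11 := by
  simp [Duu, pr1, pr2, pr3]
  ring

lemma hasFDerivAt_uu (D11 D22 : ℝ) (q : ℝ × ℝ × ℝ) :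
    HasFDerivAt (uu D11 D22) (Duu D11 D22 q) q := by
  have hπ1 : HasFDerivAt (fun q : ℝ × ℝ × ℝ => q.1) pr1 q := pr1.hasFDerivAt
  have hπ2 : HasFDerivAt (fun q : ℝ × ℝ × ℝ => q.2.1) pr2 q := pr2.hasFDerivAt
  have hπ3 : HasFDerivAt (fun q : ℝ × ℝ × ℝ => q.2.2) pr3 q := pr3.hasFDerivAt
  have h := (((hπ3.mul hπ3).const_mul (1/D11)).add
    (((hπ1.mul hπ1).add (hπ2.mul hπ2)).const_mul (1/D22)))
  have hfun : (fun q : ℝ × ℝ × ℝ => (1/D11) * (q.2.2*q.2.2) + (1/D22) * (q.1*q.1 + q.2.1*q.2.1))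
      = uu D11 D22 := by
    funext q; simp [uu]; ring
  change HasFDerivAt (fun q : ℝ × ℝ × ℝ => (1/D11) * (q.2.2*q.2.2) + (1/D22) * (q.1*q.1 + q.2.1*q.2.1)) _ q at h
  rw [hfun] at h
  refine h.congr_fderiv ?_
  ext
  · simp [Duu, pr1, pr2, pr3]; ring
  · simp [Duu, pr1, pr2, pr3]; ring
  · simp [Duu, pr1, pr2, pr3]; ring

lemma uu_pos (D11 D22 : ℝ) (h11 : 0 < D11) (h22 : 0 < D22) (q : ℝ × ℝ × ℝ) (hq : q ≠ 0) :
    0 < uu D11 D22 q := by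
  have h1 : 0 ≤ q.2.2^2/D11 := by positivity
  have h2 : 0 ≤ (q.1^2 + q.2.1^2)/D22 := by positivity
  have : q.1 ≠ 0 ∨ q.2.1 ≠ 0 ∨ q.2.2 ≠ 0 := by
    by_contra h
    push_neg at h
    exact hq (Prod.ext h.1 (Prod.ext h.2.1 h.2.2))
  rw [uu]
  rcases this with h | h | h
  · have := pow_two_pos_of_ne_zero h
    have : 0 < (q.1^2 + q.2.1^2)/D22 := by positivity
    linarith
  · have := pow_two_pos_of_ne_zero h
    have : 0 < (q.1^2 + q.2.1^2)/D22 := by positivity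
    linarith
  · have := pow_two_pos_of_ne_zero h
    have : 0 < q.2.2^2/D11 := by positivity
    linarith

lemma Rres_eq (α D11 D22 : ℝ) :
    Rres α D11 D22 = fun q => Ffun (α/(4*π*D22*Real.sqrt D11)) (Real.sqrt α) (uu D11 D22 q) := by
  funext q
  rfl

lemma hasFDerivAt_Rres (α D11 D22 : ℝ) (h11 : 0 < D11) (h22 : 0 < D22)
    (q : ℝ × ℝ × ℝ) (hq : q ≠ 0) :
    HasFDerivAt (Rres α D11 D22)
      (F1 (α/(4*π*D22*Real.sqrt D11)) (Real.sqrt α) (uu D11 D22 q) • Duu D11 D22 q) q := by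
  rw [Rres_eq]
  exact (hasDerivAt_Ffun _ _ _ (uu_pos D11 D22 h11 h22 q hq)).comp_hasFDerivAt q
    (hasFDerivAt_uu D11 D22 q)

lemma second_dir (α D11 D22 : ℝ) (h11 : 0 < D11) (h22 : 0 < D22)
    (p : ℝ × ℝ × ℝ) (hp : p ≠ 0) (v : ℝ × ℝ × ℝ) :
    fderiv ℝ (fun q => fderiv ℝ (Rres α D11 D22) q v) p v
      = F1 (α/(4*π*D22*Real.sqrt D11)) (Real.sqrt α) (uu D11 D22 p) * (Duu D11 D22 v v)
        + F2 (α/(4*π*D22*Real.sqrt D11)) (Real.sqrt α) (uu D11 D22 p)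
          * (Duu D11 D22 p v)^2 := by
  set C := α/(4*π*D22*Real.sqrt D11) with hC
  set k := Real.sqrt α with hk
  have hev : (fun q => fderiv ℝ (Rres α D11 D22) q v)
      =ᶠ[nhds p] fun q => F1 C k (uu D11 D22 q) * (Duu D11 D22 q v) := by
    filter_upwards [IsOpen.mem_nhds isOpen_compl_singleton
      (Set.mem_compl_singleton_iff.mpr hp)] with q hq
    rw [(hasFDerivAt_Rres α D11 D22 h11 h22 q hq).fderiv, ContinuousLinearMap.smul_apply,
      smul_eq_mul]
  rw [hev.fderiv_eq]
  have hF1 : HasFDerivAt (fun q => F1 C k (uu D11 D22 q))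
      (F2 C k (uu D11 D22 p) • Duu D11 D22 p) p :=
    (hasDerivAt_F1 C k _ (uu_pos D11 D22 h11 h22 p hp)).comp_hasFDerivAt p
      (hasFDerivAt_uu D11 D22 p)
  have hlin : HasFDerivAt (fun q => Duu D11 D22 q v) (Duu D11 D22 v) p := by
    have hfun : (fun q : ℝ × ℝ × ℝ => Duu D11 D22 q v) = fun q => (Duu D11 D22 v) q := by
      funext q; rw [Duu_apply, Duu_apply]; ring
    rw [hfun]
    exact (Duu D11 D22 v).hasFDerivAt
  have hg : HasFDerivAt (fun q => F1 C k (uu D11 D22 q) * Duu D11 D22 q v) _ p := hF1.mul hlin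
  rw [hg.fderiv]
  simp only [ContinuousLinearMap.add_apply, ContinuousLinearMap.smul_apply, smul_eq_mul]
  ring

lemma key_ode (C k t : ℝ) (ht : 0 < t) :
    k^2 * Ffun C k t - (4*t*(F2 C k t) + 6*(F1 C k t)) = 0 := by
  have hs : 0 < Real.sqrt t := Real.sqrt_pos.mpr ht
  have hs2 : Real.sqrt t ^ 2 = t := Real.sq_sqrt ht.le
  rw [Ffun, F1, F2]
  set sq := Real.sqrt t with hsdef
  rw [← hs2]
  have hsq : (0:ℝ) < sq := hs
  field_simp
  ring

lemma rpow_neg32 (s : ℝ) (hs : 0 < s) : s ^ (-(3:ℝ)/2) = (s * Real.sqrt s)⁻¹ := by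
  rw [show (-(3:ℝ)/2) = -((3:ℝ)/2) by ring, Real.rpow_neg hs.le]
  congr 1
  rw [show ((3:ℝ)/2) = 1 + (1/2 : ℝ) by norm_num, Real.rpow_add hs, Real.rpow_one,
    ← Real.sqrt_eq_rpow]

lemma sqrt_four : Real.sqrt 4 = 2 := by
  rw [show (4:ℝ) = 2^2 by norm_num, Real.sqrt_sq (by norm_num : (0:ℝ) ≤ 2)]

theorem stmt_9 (α D11 D22 : ℝ) (hα : 0 < α) (h11 : 0 < D11) (h22 : 0 < D22)
    (p : ℝ × ℝ × ℝ) (hp : p ≠ 0) :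
    (α * ∫ s in Set.Ioi (0 : ℝ), Kheat D11 D22 s p * Real.exp (-(α * s)))
        = Rres α D11 D22 p ∧
    α * Rres α D11 D22 p
        - D11 * fderiv ℝ (fun q => fderiv ℝ (Rres α D11 D22) q (0, 0, 1)) p (0, 0, 1)
        - D22 * (fderiv ℝ (fun q => fderiv ℝ (Rres α D11 D22) q (1, 0, 0)) p (1, 0, 0)
            + fderiv ℝ (fun q => fderiv ℝ (Rres α D11 D22) q (0, 1, 0)) p (0, 1, 0)) = 0 := by
  have hu : 0 < uu D11 D22 p := uu_pos D11 D22 h11 h22 p hp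
  set u := uu D11 D22 p with hudef
  have hs : 0 < Real.sqrt u := Real.sqrt_pos.mpr hu
  have hk2 : Real.sqrt α ^ 2 = α := Real.sq_sqrt hα.le
  have hrho : rho D11 D22 p = Real.sqrt u := rfl
  constructor
  · -- the integral identity
    have hcong : ∫ s in Set.Ioi (0 : ℝ), Kheat D11 D22 s p * Real.exp (-(α * s))
        = ∫ s in Set.Ioi (0 : ℝ), ((1 / (D22 * Real.sqrt D11)) * (4*π) ^ (-(3:ℝ)/2))
            * ((s * Real.sqrt s)⁻¹ * Real.exp (-((u/4)/s + α*s))) := by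
      apply setIntegral_congr_fun measurableSet_Ioi
      intro s hs'
      have hs0 : (0:ℝ) < s := hs'
      show Kheat D11 D22 s p * Real.exp (-(α * s)) = _
      rw [Kheat]
      have hsplit : (4*π*s) ^ (-(3:ℝ)/2) = (4*π) ^ (-(3:ℝ)/2) * s ^ (-(3:ℝ)/2) := by
        rw [← Real.mul_rpow (by positivity) hs0.le]
      rw [hsplit, rpow_neg32 s hs0]
      rw [mul_assoc, ← Real.exp_add]
      have harg : -(p.2.2 ^ 2 / D11 + (p.1 ^ 2 + p.2.1 ^ 2) / D22) / (4 * s) + -(α * s)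
          = -((u/4)/s + α*s) := by
        rw [hudef, uu]
        field_simp
        ring
      rw [harg]
      ring
    rw [hcong, MeasureTheory.integral_const_mul,
      lemC (u/4) α (by positivity) hα]
    -- now pure algebra with sqrt
    have h1 : Real.sqrt (π/(u/4)) = 2 * Real.sqrt π / Real.sqrt u := by
      rw [show π/(u/4) = 4*π/u by field_simp, Real.sqrt_div (by positivity) u,
        Real.sqrt_mul (by norm_num : (0:ℝ) ≤ 4) π, sqrt_four]
    have h2 : 2 * Real.sqrt (α*(u/4)) = Real.sqrt α * Real.sqrt u := by
      rw [show α*(u/4) = (α*u)/4 by ring, Real.sqrt_div (by positivity) 4, sqrt_four,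
        Real.sqrt_mul hα.le u]
      ring
    have h3 : (4*π) ^ (-(3:ℝ)/2) = (8 * π * Real.sqrt π)⁻¹ := by
      rw [rpow_neg32 _ (by positivity), Real.sqrt_mul (by norm_num : (0:ℝ) ≤ 4) π, sqrt_four]
      ring_nf
    rw [h1, h2, h3, Rres, hrho]
    have hπ : 0 < Real.sqrt π := Real.sqrt_pos.mpr pi_pos
    have hD : 0 < Real.sqrt D11 := Real.sqrt_pos.mpr h11
    field_simp
    ring
  · -- the PDE
    rw [second_dir α D11 D22 h11 h22 p hp, second_dir α D11 D22 h11 h22 p hp,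
      second_dir α D11 D22 h11 h22 p hp]
    set C := α/(4*π*D22*Real.sqrt D11) with hC
    set k := Real.sqrt α with hk
    have hR : Rres α D11 D22 p = Ffun C k u := by rw [Rres_eq]
    rw [hR]
    rw [Duu_apply, Duu_apply, Duu_apply, Duu_apply, Duu_apply, Duu_apply]
    simp only
    have hode := key_ode C k u hu
    have hsum : D11 * (2*p.2.2/D11)^2 + D22 * ((2*p.1/D22)^2 + (2*p.2.1/D22)^2)
        = 4 * u := by
      rw [hudef, uu]; field_simp; ring
    have hα' : α = k^2 := hk2.symm
    rw [hα']
    rw [← hudef]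
    norm_num
    have hexpand : D11 * (F1 C k u * (2/D11) + F2 C k u * (2*p.2.2/D11)^2)
        + D22 * (F1 C k u * (2/D22) + F2 C k u * (2*p.1/D22)^2
            + (F1 C k u * (2/D22) + F2 C k u * (2*p.2.1/D22)^2))
        = 6 * F1 C k u + F2 C k u * (4*u) := by
      rw [← hsum]
      field_simp
      ring
    linarith [hode, hexpand]
end

section
/- Let ε > 0, c > 0, let I ⊆ ℝ be an interval containing 0, and let z : I → (−1, 1) be twice continuously differentiable with z''(s) = ε·z(s) and (z'(s))² − ε·z(s)² = (c² − 1)·ε for all s ∈ I. Fix ỹ₀ ∈ ℝ and define x̃(s) = z(s)/(c·√ε) and ỹ(s) = ỹ₀ + (1/c)·∫₀^s √(1 − z(τ)²) dτ. Then the planar curve s ↦ (x̃(s), ỹ(s)) has unit speed, i.e. (x̃'(s))² + (ỹ'(s))² = 1 for all s ∈ I, and its signed curvature satisfies x̃'(s)·ỹ''(s) − ỹ'(s)·x̃''(s) = −√ε · z(s)/√(1 − z(s)²); in particular its squared curvature equals ε·z(s)²/(1 − z(s)²). -/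
/-!
STATEMENT 17: Let ε, c > 0, I an interval containing 0, z : I → (−1,1) twice
continuously differentiable with z'' = εz and (z')² − εz² = (c² − 1)ε on I.  Define
x̃(s) = z(s)/(c√ε), ỹ(s) = ỹ₀ + (1/c)∫₀^s √(1 − z(τ)²) dτ.  Then the planar curve
s ↦ (x̃(s), ỹ(s)) has unit speed, x̃'² + ỹ'² = 1, and its signed curvature satisfies
x̃'ỹ'' − ỹ'x̃'' = −√ε z/√(1 − z²); in particular its squared curvature is εz²/(1 − z²).
(The interval I is encoded as a convex subset of ℝ; derivatives are taken within I.)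
-/

open MeasureTheory

open Filter Set in
private lemma ftcFilter_of_ordConnected {I : Set ℝ} (hI : Set.OrdConnected I) {s : ℝ}
    (hs : s ∈ I) : intervalIntegral.FTCFilter s (nhdsWithin s I) (nhdsWithin s I) := by
  haveI := hI
  haveI h1 : TendstoIxxClass Set.Ioc (𝓟 I) (𝓟 I) :=
    Filter.tendstoIxxClass_of_subset fun _ _ => Set.Ioc_subset_Icc_self
  haveI h2 : TendstoIxxClass Set.Ioc (nhdsWithin s I) (nhdsWithin s I) := by
    rw [nhdsWithin]; exact Filter.tendstoIxxClass_inf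
  haveI h3 : IsMeasurablyGenerated (nhdsWithin s I) :=
    hI.measurableSet.nhdsWithin_isMeasurablyGenerated s
  exact { pure_le := pure_le_nhdsWithin hs, le_nhds := inf_le_left }

theorem stmt_17 (ε c : ℝ) (hε : 0 < ε) (hc : 0 < c)
    (I : Set ℝ) (hI : Convex ℝ I) (h0 : (0 : ℝ) ∈ I)
    (z zd zdd : ℝ → ℝ)
    (hrange : ∀ s ∈ I, z s ∈ Set.Ioo (-1 : ℝ) 1)
    (hz : ∀ s ∈ I, HasDerivWithinAt z (zd s) I s)
    (hzd : ∀ s ∈ I, HasDerivWithinAt zd (zdd s) I s)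
    (hode : ∀ s ∈ I, zdd s = ε * z s)
    (hconserved : ∀ s ∈ I, (zd s) ^ 2 - ε * (z s) ^ 2 = (c ^ 2 - 1) * ε)
    (y0 : ℝ) :
    -- x̃ and ỹ
    (let xt : ℝ → ℝ := fun t => z t / (c * Real.sqrt ε)
     let yt : ℝ → ℝ := fun t => y0 + (1 / c) * ∫ τ in (0 : ℝ)..t, Real.sqrt (1 - (z τ) ^ 2)
     -- their first and second derivatives
     let xd : ℝ → ℝ := fun s => zd s / (c * Real.sqrt ε)
     let yd : ℝ → ℝ := fun s => (1 / c) * Real.sqrt (1 - (z s) ^ 2)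
     let xdd : ℝ → ℝ := fun s => Real.sqrt ε * z s / c
     let ydd : ℝ → ℝ := fun s => -(z s * zd s) / (c * Real.sqrt (1 - (z s) ^ 2))
     ∀ s ∈ I,
       HasDerivWithinAt xt (xd s) I s ∧
       HasDerivWithinAt yt (yd s) I s ∧
       HasDerivWithinAt xd (xdd s) I s ∧
       HasDerivWithinAt yd (ydd s) I s ∧
       -- unit speed
       (xd s) ^ 2 + (yd s) ^ 2 = 1 ∧
       -- signed curvature
       xd s * ydd s - yd s * xdd s
         = -Real.sqrt ε * z s / Real.sqrt (1 - (z s) ^ 2) ∧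
       -- squared curvature
       (xd s * ydd s - yd s * xdd s) ^ 2 = ε * (z s) ^ 2 / (1 - (z s) ^ 2)) := by
  intro xt yt xd yd xdd ydd s hs
  have hOrd : Set.OrdConnected I := hI.ordConnected
  have hc0 : c ≠ 0 := hc.ne'
  have ha0 : (0 : ℝ) < Real.sqrt ε := Real.sqrt_pos.2 hε
  have ha : Real.sqrt ε ^ 2 = ε := Real.sq_sqrt hε.le
  have hz2 : ∀ t ∈ I, (0 : ℝ) < 1 - z t ^ 2 := by
    intro t ht
    have h := hrange t ht
    nlinarith [h.1, h.2]
  have hw0 : (0 : ℝ) < Real.sqrt (1 - z s ^ 2) := Real.sqrt_pos.2 (hz2 s hs)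
  have hw : Real.sqrt (1 - z s ^ 2) ^ 2 = 1 - z s ^ 2 := Real.sq_sqrt (hz2 s hs).le
  have hzd2 : zd s ^ 2 = (c ^ 2 - 1) * ε + ε * z s ^ 2 := by
    have := hconserved s hs; linarith
  -- continuity of the integrand on I
  have hcont : ContinuousOn (fun τ => Real.sqrt (1 - z τ ^ 2)) I := by
    apply ContinuousOn.sqrt
    have hzc : ContinuousOn z I := fun t ht => (hz t ht).continuousWithinAt
    exact continuousOn_const.sub (hzc.pow 2)
  -- derivative of xt
  have hxt : HasDerivWithinAt xt (xd s) I s := (hz s hs).div_const _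
  -- derivative of yt
  have hyt : HasDerivWithinAt yt (yd s) I s := by
    have hint : IntervalIntegrable (fun τ => Real.sqrt (1 - z τ ^ 2)) volume 0 s :=
      (hcont.mono (hOrd.uIcc_subset h0 hs)).intervalIntegrable
    have hmeas : StronglyMeasurableAtFilter (fun τ => Real.sqrt (1 - z τ ^ 2))
        (nhdsWithin s I) :=
      ⟨I, self_mem_nhdsWithin, (hcont.mono (by rfl)).aestronglyMeasurable hOrd.measurableSet⟩
    haveI := ftcFilter_of_ordConnected hOrd hs
    have := intervalIntegral.integral_hasDerivWithinAt_right (s := I) (t := I) hint hmeas (hcont s hs)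
    exact (this.const_mul (1 / c)).const_add y0
  -- derivative of xd
  have hxd : HasDerivWithinAt xd (xdd s) I s := by
    have := (hzd s hs).div_const (c * Real.sqrt ε)
    refine this.congr_deriv (Eq.symm ?_)
    show Real.sqrt ε * z s / c = zdd s / (c * Real.sqrt ε)
    rw [hode s hs, div_eq_div_iff (by positivity) (by positivity)]
    linear_combination z s * c * ha
  -- derivative of yd
  have hyd : HasDerivWithinAt yd (ydd s) I s := by
    have hin : HasDerivWithinAt (fun t => 1 - z t ^ 2) (-(2 * z s * zd s)) I s := by
      have := ((hz s hs).pow 2).const_sub 1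
      simpa using this
    have hsq := hin.sqrt (hz2 s hs).ne'
    have := hsq.const_mul (1 / c)
    refine this.congr_deriv (Eq.symm ?_)
    show -(z s * zd s) / (c * Real.sqrt (1 - z s ^ 2))
        = 1 / c * (-(2 * z s * zd s) / (2 * Real.sqrt (1 - z s ^ 2)))
    field_simp
  have heq : xd s * ydd s - yd s * xdd s
      = -Real.sqrt ε * z s / Real.sqrt (1 - z s ^ 2) := by
    show zd s / (c * Real.sqrt ε) * (-(z s * zd s) / (c * Real.sqrt (1 - z s ^ 2)))
        - 1 / c * Real.sqrt (1 - z s ^ 2) * (Real.sqrt ε * z s / c)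
        = -Real.sqrt ε * z s / Real.sqrt (1 - z s ^ 2)
    field_simp
    linear_combination (-z s) * hzd2 + (-z s * Real.sqrt ε ^ 2) * hw
      + z s * (c ^ 2 - 1 + z s ^ 2) * ha
  refine ⟨hxt, hyt, hxd, hyd, ?_, heq, ?_⟩
  · show (zd s / (c * Real.sqrt ε)) ^ 2 + (1 / c * Real.sqrt (1 - z s ^ 2)) ^ 2 = 1
    field_simp
    rw [hw]
    linear_combination hzd2 - (c ^ 2 - 1 + z s ^ 2) * ha
  · have h2 : (-Real.sqrt ε * z s) ^ 2 = ε * z s ^ 2 := by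
      linear_combination z s ^ 2 * ha
    rw [heq, div_pow, hw, h2]
end

section
/- Let x₁ > 0 and y₁, θ₀, θ₁, κ₀, κ₁ ∈ ℝ. Set c(x) = 20(x − x₁)(x − x₁/2)x and g(x) = (κ₁ − κ₀)·c(x)/x₁³. Then among all twice continuously differentiable functions y : [0, x₁] → ℝ with y(0) = 0, y'(0) = θ₀, y(x₁) = y₁, y'(x₁) = −θ₁, the functional E(y) = ∫₀^{x₁} (y''(x) − g(x))² dx attains its minimum uniquely at y*(x) = x·θ₀ + (x³/x₁³)(−2y₁ + x₁(θ₀ − θ₁)) + (x²/x₁²)(3y₁ + x₁(θ₁ − 2θ₀)) + ((κ₀ − κ₁)/x₁³)·(x − x₁)²·(x₁/2 − x)·x². Equivalently, y* is the unique function satisfying the boundary conditions together with the Euler–Lagrange equation y⁗(x) = (κ₁ − κ₀)·c''(x)/x₁³ on (0, x₁). -/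
/-!
STATEMENT 19: Let x₁ > 0, c(x) = 20(x − x₁)(x − x₁/2)x, g(x) = (κ₁ − κ₀)c(x)/x₁³.
Among all C² functions y : [0, x₁] → ℝ with y(0) = 0, y'(0) = θ₀, y(x₁) = y₁,
y'(x₁) = −θ₁, the functional E(y) = ∫₀^{x₁} (y''(x) − g(x))² dx attains its minimum
uniquely at
y*(x) = xθ₀ + (x³/x₁³)(−2y₁ + x₁(θ₀ − θ₁)) + (x²/x₁²)(3y₁ + x₁(θ₁ − 2θ₀))
        + ((κ₀ − κ₁)/x₁³)(x − x₁)²(x₁/2 − x)x².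
Equivalently, y* is the unique such function satisfying the Euler–Lagrange equation
y⁗(x) = (κ₁ − κ₀)c''(x)/x₁³ on (0, x₁).
-/

open MeasureTheory

open Set MeasureTheory intervalIntegral

noncomputable def quintic (c0 c1 c2 c3 c4 c5 : ℝ) : ℝ → ℝ :=
  fun x => c0 + c1*x + c2*x^2 + c3*x^3 + c4*x^4 + c5*x^5

lemma quintic_hasDerivAt (c0 c1 c2 c3 c4 c5 x : ℝ) :
    HasDerivAt (quintic c0 c1 c2 c3 c4 c5) (quintic c1 (2*c2) (3*c3) (4*c4) (5*c5) 0 x) x := by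
  have h : HasDerivAt (fun x : ℝ => c0 + c1*x + c2*x^2 + c3*x^3 + c4*x^4 + c5*x^5)
      (0 + c1*1 + c2*((2:ℕ)*x^(2-1)) + c3*((3:ℕ)*x^(3-1)) + c4*((4:ℕ)*x^(4-1))
        + c5*((5:ℕ)*x^(5-1))) x :=
    (((((hasDerivAt_const x c0).add ((hasDerivAt_id' (x := x)).const_mul c1)).add
      ((hasDerivAt_pow 2 x).const_mul c2)).add ((hasDerivAt_pow 3 x).const_mul c3)).add
      ((hasDerivAt_pow 4 x).const_mul c4)).add ((hasDerivAt_pow 5 x).const_mul c5)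
  have : HasDerivAt (quintic c0 c1 c2 c3 c4 c5)
      (0 + c1*1 + c2*((2:ℕ)*x^(2-1)) + c3*((3:ℕ)*x^(3-1)) + c4*((4:ℕ)*x^(4-1))
        + c5*((5:ℕ)*x^(5-1))) x := h
  convert this using 1
  simp only [quintic]
  push_cast
  norm_num
  ring

lemma quintic_contDiff {n : WithTop ℕ∞} (c0 c1 c2 c3 c4 c5 : ℝ) :
    ContDiff ℝ n (quintic c0 c1 c2 c3 c4 c5) := by
  unfold quintic; fun_prop

lemma quintic_deriv (c0 c1 c2 c3 c4 c5 : ℝ) :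
    deriv (quintic c0 c1 c2 c3 c4 c5) = quintic c1 (2*c2) (3*c3) (4*c4) (5*c5) 0 :=
  funext fun x => (quintic_hasDerivAt c0 c1 c2 c3 c4 c5 x).deriv

lemma iter2_eq {f : ℝ → ℝ} {s : Set ℝ} (hs : UniqueDiffOn ℝ s) {x : ℝ} (hx : x ∈ s) :
    iteratedDerivWithin 2 f s x = derivWithin (derivWithin f s) s x := by
  rw [show (2:ℕ) = 1+1 from rfl, iteratedDerivWithin_succ]
  exact derivWithin_congr (fun y hy => congrFun iteratedDerivWithin_one y)
    (congrFun iteratedDerivWithin_one x)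

lemma iter2_of_hasDerivAt {f f' f'' : ℝ → ℝ} {s : Set ℝ} (hs : UniqueDiffOn ℝ s)
    (h1 : ∀ y, HasDerivAt f (f' y) y) (h2 : ∀ y, HasDerivAt f' (f'' y) y)
    {x : ℝ} (hx : x ∈ s) : iteratedDerivWithin 2 f s x = f'' x := by
  rw [iter2_eq hs hx]
  have e1 : EqOn (derivWithin f s) f' s := fun y hy =>
    (h1 y).hasDerivWithinAt.derivWithin (hs y hy)
  rw [derivWithin_congr e1 (e1 hx)]
  exact (h2 x).hasDerivWithinAt.derivWithin (hs x hx)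

lemma iteratedDerivWithin_Ioo_eq_Icc (n : ℕ) (f : ℝ → ℝ) (x1 : ℝ) {x : ℝ}
    (hx : x ∈ Ioo (0:ℝ) x1) :
    iteratedDerivWithin n f (Ioo 0 x1) x = iteratedDerivWithin n f (Icc 0 x1) x := by
  have h : Icc (0:ℝ) x1 ∩ Ioo 0 x1 = Ioo 0 x1 := inter_eq_self_of_subset_right Ioo_subset_Icc_self
  rw [iteratedDerivWithin_eq_iteratedFDerivWithin, iteratedDerivWithin_eq_iteratedFDerivWithin,
    ← h, iteratedFDerivWithin_inter_open isOpen_Ioo hx]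

lemma const_of_derivWithin_zero' {s : Set ℝ} (hconv : Convex ℝ s) (huq : UniqueDiffOn ℝ s)
    {f : ℝ → ℝ} (hdiff : DifferentiableOn ℝ f s) (hz : ∀ x ∈ s, derivWithin f s x = 0)
    {x y : ℝ} (hx : x ∈ s) (hy : y ∈ s) : f x = f y := by
  refine hconv.is_const_of_fderivWithin_eq_zero hdiff (fun z hzs => ?_) hx hy
  have h1 : HasDerivWithinAt f 0 s z := by
    have h := (hdiff z hzs).hasDerivWithinAt
    rwa [hz z hzs] at h
  have h2 := h1.hasFDerivWithinAt.fderivWithin (huq z hzs)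
  rw [h2]
  ext
  simp

lemma eq_zero_of_sq_integral (x1 : ℝ) (hx1 : 0 < x1) (f : ℝ → ℝ)
    (hf : ContinuousOn f (Icc 0 x1)) (hint : (∫ x in (0:ℝ)..x1, f x ^ 2) = 0) :
    ∀ x ∈ Icc (0:ℝ) x1, f x = 0 := by
  by_contra hcon
  push_neg at hcon
  obtain ⟨x0, hx0, hne⟩ := hcon
  have hpos : 0 < ∫ x in (0:ℝ)..x1, f x ^ 2 := by
    refine intervalIntegral.integral_pos hx1 (hf.pow 2) (fun x _ => sq_nonneg _) ⟨x0, hx0, ?_⟩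
    have h := abs_pos.2 hne
    nlinarith [sq_abs (f x0)]
  exact hpos.ne' hint

lemma parts_zero (x1 a b : ℝ) (hx1 : 0 < x1) (h : ℝ → ℝ)
    (hC2 : ContDiffOn ℝ 2 h (Icc 0 x1)) (h0 : h 0 = 0) (h1 : h x1 = 0)
    (hd0 : derivWithin h (Icc 0 x1) 0 = 0) (hd1 : derivWithin h (Icc 0 x1) x1 = 0) :
    ∫ x in (0:ℝ)..x1, (a * x + b) * iteratedDerivWithin 2 h (Icc 0 x1) x = 0 := by
  have uq : UniqueDiffOn ℝ (Icc (0:ℝ) x1) := uniqueDiffOn_Icc hx1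
  set h' : ℝ → ℝ := derivWithin h (Icc 0 x1) with hh'
  have hC1' : ContDiffOn ℝ 1 h' (Icc 0 x1) := hC2.derivWithin uq (by norm_num)
  have hH2cont : ContinuousOn (iteratedDerivWithin 2 h (Icc 0 x1)) (Icc 0 x1) :=
    hC2.continuousOn_iteratedDerivWithin (by norm_num) uq
  have key : ∀ x ∈ Ioo (0:ℝ) x1, HasDerivAt (fun x => (a*x+b) * h' x - a * h x)
      ((a*x+b) * iteratedDerivWithin 2 h (Icc 0 x1) x) x := by
    intro x hx
    have hn : Icc (0:ℝ) x1 ∈ nhds x := Icc_mem_nhds hx.1 hx.2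
    have hxs : x ∈ Icc (0:ℝ) x1 := Ioo_subset_Icc_self hx
    have Hh : HasDerivAt h (h' x) x := by
      have hd := ((hC2.differentiableOn (by norm_num)).differentiableAt hn).hasDerivAt
      rwa [hh', derivWithin_of_mem_nhds hn]
    have Hh' : HasDerivAt h' (iteratedDerivWithin 2 h (Icc 0 x1) x) x := by
      have hd := ((hC1'.differentiableOn one_ne_zero).differentiableAt hn).hasDerivAt
      have e : iteratedDerivWithin 2 h (Icc 0 x1) x = deriv h' x := by
        rw [iter2_eq uq hxs, ← hh']
        exact derivWithin_of_mem_nhds hn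
      rwa [e]
    have H := ((((hasDerivAt_id x).const_mul a).add_const b).mul Hh').sub (Hh.const_mul a)
    have H2 : HasDerivAt (fun x => (a*x+b) * h' x - a * h x)
        (a * 1 * h' x + (a * x + b) * iteratedDerivWithin 2 h (Icc 0 x1) x - a * h' x) x := H
    convert H2 using 1
    ring
  have hFcont : ContinuousOn (fun x => (a*x+b) * h' x - a * h x) (Icc 0 x1) :=
    ((((continuous_const.mul continuous_id).add continuous_const).continuousOn).mul
      hC1'.continuousOn).sub (continuousOn_const.mul hC2.continuousOn)
  have hInt : IntervalIntegrable (fun x => (a*x+b) * iteratedDerivWithin 2 h (Icc 0 x1) x)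
      volume 0 x1 := by
    apply ContinuousOn.intervalIntegrable
    rw [uIcc_of_le hx1.le]
    exact (((continuous_const.mul continuous_id).add continuous_const).continuousOn).mul hH2cont
  have hFTC := integral_eq_sub_of_hasDerivAt_of_le hx1.le hFcont key hInt
  rw [hFTC, hd0, hd1, h0, h1]
  ring

lemma iter2_sub (x1 : ℝ) (hx1 : 0 < x1) (y ystar : ℝ → ℝ)
    (hy : ContDiffOn ℝ 2 y (Icc 0 x1)) (hys : ContDiffOn ℝ 2 ystar (Icc 0 x1))
    {x : ℝ} (hx : x ∈ Icc (0:ℝ) x1) :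
    iteratedDerivWithin 2 (fun t => y t - ystar t) (Icc 0 x1) x
      = iteratedDerivWithin 2 y (Icc 0 x1) x - iteratedDerivWithin 2 ystar (Icc 0 x1) x := by
  have uq : UniqueDiffOn ℝ (Icc (0:ℝ) x1) := uniqueDiffOn_Icc hx1
  have hdy : DifferentiableOn ℝ y (Icc 0 x1) := hy.differentiableOn (by norm_num)
  have hdys : DifferentiableOn ℝ ystar (Icc 0 x1) := hys.differentiableOn (by norm_num)
  have e1 : EqOn (derivWithin (fun t => y t - ystar t) (Icc 0 x1))
      (fun t => derivWithin y (Icc 0 x1) t - derivWithin ystar (Icc 0 x1) t) (Icc 0 x1) :=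
    fun t ht => derivWithin_sub (hdy t ht) (hdys t ht)
  rw [iter2_eq uq hx, derivWithin_congr e1 (e1 hx),
    derivWithin_fun_sub ((hy.derivWithin uq (m := 1) (by norm_num)).differentiableOn one_ne_zero x hx)
      ((hys.derivWithin uq (m := 1) (by norm_num)).differentiableOn one_ne_zero x hx),
    iter2_eq uq hx, iter2_eq uq hx]

lemma eq_of_iter2_eq_zero (x1 : ℝ) (hx1 : 0 < x1) (h : ℝ → ℝ)
    (hC2 : ContDiffOn ℝ 2 h (Icc 0 x1)) (h0 : h 0 = 0) (hd0 : derivWithin h (Icc 0 x1) 0 = 0)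
    (hz : ∀ x ∈ Icc (0:ℝ) x1, iteratedDerivWithin 2 h (Icc 0 x1) x = 0) :
    ∀ x ∈ Icc (0:ℝ) x1, h x = 0 := by
  have uq : UniqueDiffOn ℝ (Icc (0:ℝ) x1) := uniqueDiffOn_Icc hx1
  have hqdiff : DifferentiableOn ℝ (derivWithin h (Icc 0 x1)) (Icc 0 x1) :=
    (hC2.derivWithin uq (m := 1) (by norm_num)).differentiableOn one_ne_zero
  have hqz : ∀ x ∈ Ico (0:ℝ) x1, derivWithin (derivWithin h (Icc 0 x1)) (Icc 0 x1) x = 0 := by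
    intro x hx
    have hx' : x ∈ Icc (0:ℝ) x1 := Ico_subset_Icc_self hx
    rw [← iter2_eq uq hx']
    exact hz x hx'
  have hqconst := constant_of_derivWithin_zero hqdiff hqz
  have hq0 : ∀ x ∈ Icc (0:ℝ) x1, derivWithin h (Icc 0 x1) x = 0 := by
    intro x hx
    rw [hqconst x hx, hd0]
  have hhdiff : DifferentiableOn ℝ h (Icc 0 x1) := hC2.differentiableOn (by norm_num)
  have hhconst := constant_of_derivWithin_zero hhdiff (fun x hx => hq0 x (Ico_subset_Icc_self hx))
  intro x hx
  rw [hhconst x hx, h0]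

lemma energy_split (x1 A B : ℝ) (hx1 : 0 < x1) (g y ystar : ℝ → ℝ)
    (hy : ContDiffOn ℝ 2 y (Icc 0 x1)) (hys : ContDiffOn ℝ 2 ystar (Icc 0 x1))
    (hgc : ContinuousOn g (Icc 0 x1))
    (hlin : ∀ x ∈ Icc (0:ℝ) x1, iteratedDerivWithin 2 ystar (Icc 0 x1) x - g x = A * x + B) :
    (∫ x in (0:ℝ)..x1, (iteratedDerivWithin 2 y (Icc 0 x1) x - g x) ^ 2)
      = (∫ x in (0:ℝ)..x1, (iteratedDerivWithin 2 ystar (Icc 0 x1) x - g x) ^ 2)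
        + (∫ x in (0:ℝ)..x1,
            (A*x+B) * iteratedDerivWithin 2 (fun t => y t - ystar t) (Icc 0 x1) x) * 2
        + ∫ x in (0:ℝ)..x1,
            (iteratedDerivWithin 2 (fun t => y t - ystar t) (Icc 0 x1) x) ^ 2 := by
  have uq : UniqueDiffOn ℝ (Icc (0:ℝ) x1) := uniqueDiffOn_Icc hx1
  have hIcc : uIcc (0:ℝ) x1 = Icc 0 x1 := uIcc_of_le hx1.le
  have hH2 : ∀ x ∈ Icc (0:ℝ) x1, iteratedDerivWithin 2 (fun t => y t - ystar t) (Icc 0 x1) x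
      = iteratedDerivWithin 2 y (Icc 0 x1) x - iteratedDerivWithin 2 ystar (Icc 0 x1) x :=
    fun x hx => iter2_sub x1 hx1 y ystar hy hys hx
  -- continuity facts
  have hcy : ContinuousOn (iteratedDerivWithin 2 y (Icc 0 x1)) (Icc 0 x1) :=
    hy.continuousOn_iteratedDerivWithin (by norm_num) uq
  have hcys : ContinuousOn (iteratedDerivWithin 2 ystar (Icc 0 x1)) (Icc 0 x1) :=
    hys.continuousOn_iteratedDerivWithin (by norm_num) uq
  have hch : ContinuousOn (iteratedDerivWithin 2 (fun t => y t - ystar t) (Icc 0 x1))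
      (Icc 0 x1) := (hy.sub hys).continuousOn_iteratedDerivWithin (by norm_num) uq
  have hlincont : ContinuousOn (fun x : ℝ => A * x + B) (Icc 0 x1) :=
    ((continuous_const.mul continuous_id).add continuous_const).continuousOn
  have hInt1 : IntervalIntegrable (fun x => (A*x+B)^2) volume 0 x1 := by
    apply ContinuousOn.intervalIntegrable; rw [hIcc]; exact hlincont.pow 2
  have hInt2 : IntervalIntegrable
      (fun x => (A*x+B) * iteratedDerivWithin 2 (fun t => y t - ystar t) (Icc 0 x1) x)
      volume 0 x1 := by
    apply ContinuousOn.intervalIntegrable; rw [hIcc]; exact hlincont.mul hch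
  have hInt3 : IntervalIntegrable
      (fun x => (iteratedDerivWithin 2 (fun t => y t - ystar t) (Icc 0 x1) x)^2)
      volume 0 x1 := by
    apply ContinuousOn.intervalIntegrable; rw [hIcc]; exact hch.pow 2
  have hcongr1 : (∫ x in (0:ℝ)..x1, (iteratedDerivWithin 2 y (Icc 0 x1) x - g x) ^ 2)
      = ∫ x in (0:ℝ)..x1, ((A*x+B)^2
          + ((A*x+B) * iteratedDerivWithin 2 (fun t => y t - ystar t) (Icc 0 x1) x * 2
          + (iteratedDerivWithin 2 (fun t => y t - ystar t) (Icc 0 x1) x)^2)) := by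
    apply intervalIntegral.integral_congr
    intro x hx
    dsimp only
    rw [hIcc] at hx
    have e1 := hlin x hx
    have e2 := hH2 x hx
    have : iteratedDerivWithin 2 y (Icc 0 x1) x - g x
        = (A*x+B) + iteratedDerivWithin 2 (fun t => y t - ystar t) (Icc 0 x1) x := by
      rw [e2]; linarith
    rw [this]; ring
  have hcongr2 : (∫ x in (0:ℝ)..x1, (iteratedDerivWithin 2 ystar (Icc 0 x1) x - g x) ^ 2)
      = ∫ x in (0:ℝ)..x1, (A*x+B)^2 := by
    apply intervalIntegral.integral_congr
    intro x hx
    dsimp only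
    rw [hIcc] at hx
    rw [hlin x hx]
  rw [hcongr1, hcongr2]
  rw [intervalIntegral.integral_add hInt1 (by exact (hInt2.mul_const 2).add hInt3),
    intervalIntegral.integral_add (hInt2.mul_const 2) hInt3]
  rw [intervalIntegral.integral_mul_const]
  ring


theorem stmt_19 (x1 : ℝ) (hx1 : 0 < x1) (y1 θ0 θ1 κ0 κ1 : ℝ) :
    let c : ℝ → ℝ := fun x => 20 * (x - x1) * (x - x1 / 2) * x
    let g : ℝ → ℝ := fun x => (κ1 - κ0) * c x / x1 ^ 3
    let ystar : ℝ → ℝ := fun x =>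
      x * θ0 + (x ^ 3 / x1 ^ 3) * (-2 * y1 + x1 * (θ0 - θ1))
        + (x ^ 2 / x1 ^ 2) * (3 * y1 + x1 * (θ1 - 2 * θ0))
        + ((κ0 - κ1) / x1 ^ 3) * (x - x1) ^ 2 * (x1 / 2 - x) * x ^ 2
    -- the admissible class: C² on [0, x₁] with the prescribed boundary values and slopes
    let Adm : (ℝ → ℝ) → Prop := fun y =>
      ContDiffOn ℝ 2 y (Set.Icc 0 x1) ∧ y 0 = 0 ∧ y x1 = y1 ∧
      derivWithin y (Set.Icc 0 x1) 0 = θ0 ∧ derivWithin y (Set.Icc 0 x1) x1 = -θ1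
    -- the energy E(y) = ∫₀^{x₁} (y''(x) − g(x))² dx
    let E : (ℝ → ℝ) → ℝ := fun y =>
      ∫ x in (0 : ℝ)..x1, (iteratedDerivWithin 2 y (Set.Icc 0 x1) x - g x) ^ 2
    -- y* is admissible,
    Adm ystar ∧
    -- it minimizes E over the admissible class,
    (∀ y : ℝ → ℝ, Adm y → E ystar ≤ E y) ∧
    -- uniquely so,
    (∀ y : ℝ → ℝ, Adm y → E y = E ystar → Set.EqOn y ystar (Set.Icc 0 x1)) ∧
    -- y* satisfies the Euler–Lagrange equation y⁗ = (κ₁ − κ₀)c''/x₁³ on (0, x₁),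
    (∀ x ∈ Set.Ioo 0 x1, iteratedDeriv 4 ystar x = (κ1 - κ0) * iteratedDeriv 2 c x / x1 ^ 3) ∧
    -- and it is the unique admissible function doing so:
    (∀ y : ℝ → ℝ, Adm y → ContDiffOn ℝ 4 y (Set.Ioo 0 x1) →
      (∀ x ∈ Set.Ioo 0 x1,
        iteratedDerivWithin 4 y (Set.Ioo 0 x1) x = (κ1 - κ0) * iteratedDeriv 2 c x / x1 ^ 3) →
      Set.EqOn y ystar (Set.Icc 0 x1)) := by
  
  intro c g ystar Adm E
  have uq : UniqueDiffOn ℝ (Set.Icc (0:ℝ) x1) := uniqueDiffOn_Icc hx1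
  set a2 : ℝ := (3*y1 + x1*(θ1-2*θ0))/x1^2 with ha2
  set a3 : ℝ := (-2*y1 + x1*(θ0-θ1))/x1^3 with ha3
  set cc : ℝ := (κ0-κ1)/x1^3 with hcc
  set B2 : ℝ := a2 + cc*(x1^3/2) with hB2
  set B3 : ℝ := a3 - 2*cc*x1^2 with hB3
  set B4 : ℝ := cc*(5*x1/2) with hB4
  set B5 : ℝ := -cc with hB5
  set P0 : ℝ → ℝ := quintic 0 θ0 B2 B3 B4 B5 with hP0
  set P1 : ℝ → ℝ := quintic θ0 (2*B2) (3*B3) (4*B4) (5*B5) 0 with hP1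
  set P2 : ℝ → ℝ := quintic (2*B2) (2*(3*B3)) (3*(4*B4)) (4*(5*B5)) (5*0) 0 with hP2
  set P3 : ℝ → ℝ := quintic (2*(3*B3)) (2*(3*(4*B4))) (3*(4*(5*B5))) (4*(5*0)) (5*0) 0 with hP3
  set P4 : ℝ → ℝ := quintic (2*(3*(4*B4))) (2*(3*(4*(5*B5)))) (3*(4*(5*0))) (4*(5*0)) (5*0) 0
    with hP4
  have HP0 : ystar = P0 := by
    funext t
    show t * θ0 + (t ^ 3 / x1 ^ 3) * (-2 * y1 + x1 * (θ0 - θ1))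
        + (t ^ 2 / x1 ^ 2) * (3 * y1 + x1 * (θ1 - 2 * θ0))
        + ((κ0 - κ1) / x1 ^ 3) * (t - x1) ^ 2 * (x1 / 2 - t) * t ^ 2 = P0 t
    rw [hP0]; simp only [quintic]
    rw [hB2, hB3, hB4, hB5, ha2, ha3, hcc]; ring
  have HQ0 : ∀ t, HasDerivAt P0 (P1 t) t := by
    intro t; rw [hP0, hP1]; exact quintic_hasDerivAt _ _ _ _ _ _ t
  have H0 : ∀ t, HasDerivAt ystar (P1 t) t := by intro t; rw [HP0]; exact HQ0 t
  have H1 : ∀ t, HasDerivAt P1 (P2 t) t := by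
    intro t; rw [hP1, hP2]; exact quintic_hasDerivAt _ _ _ _ _ _ t
  have H2d : ∀ t, HasDerivAt P2 (P3 t) t := by
    intro t; rw [hP2, hP3]; exact quintic_hasDerivAt _ _ _ _ _ _ t
  have H3 : ∀ t, HasDerivAt P3 (P4 t) t := by
    intro t; rw [hP3, hP4]; exact quintic_hasDerivAt _ _ _ _ _ _ t
  have hysC2 : ∀ n : WithTop ℕ∞, ContDiffOn ℝ n ystar (Set.Icc 0 x1) := by
    intro n; rw [HP0, hP0]; exact (quintic_contDiff _ _ _ _ _ _).contDiffOn
  have hy0 : ystar 0 = 0 := by rw [HP0, hP0]; simp [quintic]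
  have hy1 : ystar x1 = y1 := by
    rw [HP0, hP0]; simp only [quintic]
    rw [hB2, hB3, hB4, hB5, ha2, ha3, hcc]; field_simp; ring
  have hders : ∀ x ∈ Set.Icc (0:ℝ) x1, derivWithin ystar (Set.Icc 0 x1) x = P1 x :=
    fun x hx => (H0 x).hasDerivWithinAt.derivWithin (uq x hx)
  have hyd0 : derivWithin ystar (Set.Icc 0 x1) 0 = θ0 := by
    rw [hders 0 (Set.left_mem_Icc.2 hx1.le), hP1]; simp [quintic]
  have hyd1 : derivWithin ystar (Set.Icc 0 x1) x1 = -θ1 := by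
    rw [hders x1 (Set.right_mem_Icc.2 hx1.le), hP1]; simp only [quintic]
    rw [hB2, hB3, hB4, hB5, ha2, ha3, hcc]; field_simp; ring
  have hAdmY : Adm ystar := ⟨hysC2 2, hy0, hy1, hyd0, hyd1⟩
  have hys2 : ∀ x ∈ Set.Icc (0:ℝ) x1, iteratedDerivWithin 2 ystar (Set.Icc 0 x1) x = P2 x := by
    intro x hx
    rw [HP0]
    exact iter2_of_hasDerivAt uq HQ0 H1 hx
  set Al : ℝ := 6*a3 - 2*cc*x1^2 with hAl
  set Bl : ℝ := 2*a2 + cc*x1^3 with hBl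
  have hlin : ∀ x ∈ Set.Icc (0:ℝ) x1,
      iteratedDerivWithin 2 ystar (Set.Icc 0 x1) x - g x = Al*x + Bl := by
    intro x hx
    rw [hys2 x hx]
    show P2 x - (κ1 - κ0) * (20 * (x - x1) * (x - x1 / 2) * x) / x1 ^ 3 = Al*x + Bl
    rw [hP2]; simp only [quintic]
    rw [hAl, hBl, hB2, hB3, hB4, hB5, ha2, ha3, hcc]; ring
  have hgcont : ContinuousOn g (Set.Icc 0 x1) := by
    have hgc : Continuous g := by
      show Continuous fun x : ℝ => (κ1 - κ0) * (20 * (x - x1) * (x - x1 / 2) * x) / x1 ^ 3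
      fun_prop
    exact hgc.continuousOn
  have hE : ∀ f : ℝ → ℝ, E f
      = ∫ x in (0:ℝ)..x1, (iteratedDerivWithin 2 f (Set.Icc 0 x1) x - g x) ^ 2 := fun _ => rfl
  have hAdm' : ∀ f : ℝ → ℝ, Adm f → ContDiffOn ℝ 2 f (Set.Icc 0 x1) ∧ f 0 = 0 ∧ f x1 = y1 ∧
      derivWithin f (Set.Icc 0 x1) 0 = θ0 ∧ derivWithin f (Set.Icc 0 x1) x1 = -θ1 :=
    fun f hf => hf
  have hsplit : ∀ f : ℝ → ℝ, ContDiffOn ℝ 2 f (Set.Icc 0 x1) →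
      E f = E ystar + (∫ x in (0:ℝ)..x1,
          (Al*x+Bl) * iteratedDerivWithin 2 (fun t => f t - ystar t) (Set.Icc 0 x1) x) * 2
        + ∫ x in (0:ℝ)..x1,
            (iteratedDerivWithin 2 (fun t => f t - ystar t) (Set.Icc 0 x1) x) ^ 2 := by
    intro f hf
    rw [hE f, hE ystar]
    exact energy_split x1 Al Bl hx1 g f ystar hf (hysC2 2) hgcont hlin
  have hcross : ∀ (a b : ℝ) (f : ℝ → ℝ), Adm f →
      ∫ x in (0:ℝ)..x1,
        (a*x+b) * iteratedDerivWithin 2 (fun t => f t - ystar t) (Set.Icc 0 x1) x = 0 := by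
    intro a b f hf
    obtain ⟨hfC, hf0, hf1, hfd0, hfd1⟩ := hAdm' f hf
    have hm0 : (0:ℝ) ∈ Set.Icc (0:ℝ) x1 := Set.left_mem_Icc.2 hx1.le
    have hm1 : x1 ∈ Set.Icc (0:ℝ) x1 := Set.right_mem_Icc.2 hx1.le
    refine parts_zero x1 a b hx1 _ (hfC.sub (hysC2 2)) (by simp [hf0, hy0]) (by simp [hf1, hy1])
      ?_ ?_
    · rw [derivWithin_fun_sub (hfC.differentiableOn (by norm_num) 0 hm0)
        ((hysC2 2).differentiableOn (by norm_num) 0 hm0), hfd0, hyd0]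
      ring
    · rw [derivWithin_fun_sub (hfC.differentiableOn (by norm_num) x1 hm1)
        ((hysC2 2).differentiableOn (by norm_num) x1 hm1), hfd1, hyd1]
      ring
  have hmin : ∀ f, Adm f → E ystar ≤ E f := by
    intro f hf
    obtain ⟨hfC, -, -, -, -⟩ := hAdm' f hf
    have hs := hsplit f hfC
    have hc := hcross Al Bl f hf
    have hnn : 0 ≤ ∫ x in (0:ℝ)..x1,
        (iteratedDerivWithin 2 (fun t => f t - ystar t) (Set.Icc 0 x1) x) ^ 2 :=
      intervalIntegral.integral_nonneg hx1.le (fun u _ => sq_nonneg _)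
    rw [hs, hc]; linarith
  have huniq : ∀ f, Adm f → E f = E ystar → Set.EqOn f ystar (Set.Icc 0 x1) := by
    intro f hf heq
    obtain ⟨hfC, hf0, hf1, hfd0, hfd1⟩ := hAdm' f hf
    have hs := hsplit f hfC
    have hc := hcross Al Bl f hf
    have hzero : ∫ x in (0:ℝ)..x1,
        (iteratedDerivWithin 2 (fun t => f t - ystar t) (Set.Icc 0 x1) x) ^ 2 = 0 := by
      rw [hs, hc] at heq; linarith
    have hch : ContinuousOn (iteratedDerivWithin 2 (fun t => f t - ystar t) (Set.Icc 0 x1))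
        (Set.Icc 0 x1) :=
      (hfC.sub (hysC2 2)).continuousOn_iteratedDerivWithin (by norm_num) uq
    have hH2z := eq_zero_of_sq_integral x1 hx1 _ hch hzero
    have hm0 : (0:ℝ) ∈ Set.Icc (0:ℝ) x1 := Set.left_mem_Icc.2 hx1.le
    have hdz : derivWithin (fun t => f t - ystar t) (Set.Icc 0 x1) 0 = 0 := by
      rw [derivWithin_fun_sub (hfC.differentiableOn (by norm_num) 0 hm0)
        ((hysC2 2).differentiableOn (by norm_num) 0 hm0), hfd0, hyd0]
      ring
    have hfin := eq_of_iter2_eq_zero x1 hx1 _ (hfC.sub (hysC2 2)) (by simp [hf0, hy0]) hdz hH2z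
    intro x hx
    have hx' := hfin x hx
    exact sub_eq_zero.mp hx'
  have e0 : deriv ystar = P1 := funext fun t => (H0 t).deriv
  have e1 : deriv P1 = P2 := funext fun t => (H1 t).deriv
  have e2 : deriv P2 = P3 := funext fun t => (H2d t).deriv
  have e3 : deriv P3 = P4 := funext fun t => (H3 t).deriv
  have hiter4 : iteratedDeriv 4 ystar = P4 := by
    show iteratedDeriv (3+1) ystar = P4
    rw [iteratedDeriv_succ]
    show deriv (iteratedDeriv (2+1) ystar) = P4
    rw [iteratedDeriv_succ]
    show deriv (deriv (iteratedDeriv (1+1) ystar)) = P4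
    rw [iteratedDeriv_succ]
    show deriv (deriv (deriv (iteratedDeriv (0+1) ystar))) = P4
    rw [iteratedDeriv_succ, iteratedDeriv_zero, e0, e1, e2, e3]
  have hcq : c = quintic 0 (10*x1^2) (-30*x1) 20 0 0 := by
    funext t
    show 20 * (t - x1) * (t - x1 / 2) * t = quintic 0 (10*x1^2) (-30*x1) 20 0 0 t
    simp only [quintic]; ring
  have hc2 : iteratedDeriv 2 c
      = quintic (2*(-30*x1)) (2*(3*20)) (3*(4*0)) (4*(5*0)) (5*0) 0 := by
    show iteratedDeriv (1+1) c = _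
    rw [iteratedDeriv_succ]
    show deriv (iteratedDeriv (0+1) c) = _
    rw [iteratedDeriv_succ, iteratedDeriv_zero, hcq, quintic_deriv, quintic_deriv]
  have hRHS : ∀ x : ℝ, (κ1 - κ0) * iteratedDeriv 2 c x / x1 ^ 3 = P4 x := by
    intro x; rw [hc2, hP4]; simp only [quintic]; rw [hB4, hB5, hcc]; ring
  have hEL : ∀ x ∈ Set.Ioo (0:ℝ) x1,
      iteratedDeriv 4 ystar x = (κ1 - κ0) * iteratedDeriv 2 c x / x1 ^ 3 := by
    intro x _
    rw [hiter4, hRHS]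
  have hELuniq : ∀ f : ℝ → ℝ, Adm f → ContDiffOn ℝ 4 f (Set.Ioo 0 x1) →
      (∀ x ∈ Set.Ioo (0:ℝ) x1, iteratedDerivWithin 4 f (Set.Ioo 0 x1) x
        = (κ1 - κ0) * iteratedDeriv 2 c x / x1 ^ 3) →
      Set.EqOn f ystar (Set.Icc 0 x1) := by
    intro f hf hC4 hELf
    obtain ⟨hfC, hf0, hf1, hfd0, hfd1⟩ := hAdm' f hf
    have uqo : UniqueDiffOn ℝ (Set.Ioo (0:ℝ) x1) := isOpen_Ioo.uniqueDiffOn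
    set w2 : ℝ → ℝ := iteratedDerivWithin 2 f (Set.Ioo 0 x1) with hw2
    set w3 : ℝ → ℝ := iteratedDerivWithin 3 f (Set.Ioo 0 x1) with hw3
    have hw2diff : DifferentiableOn ℝ w2 (Set.Ioo 0 x1) :=
      hC4.differentiableOn_iteratedDerivWithin (by norm_num) uqo
    have hw3diff : DifferentiableOn ℝ w3 (Set.Ioo 0 x1) :=
      hC4.differentiableOn_iteratedDerivWithin (by norm_num) uqo
    have hdw3 : ∀ x ∈ Set.Ioo (0:ℝ) x1, derivWithin w3 (Set.Ioo 0 x1) x = P4 x := by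
      intro x hx
      rw [hw3, ← iteratedDerivWithin_succ, show (3:ℕ)+1 = 4 from rfl,
        hELf x hx, hRHS]
    have hP3d : Differentiable ℝ P3 := by
      rw [hP3]; exact (quintic_contDiff (n := 1) _ _ _ _ _ _).differentiable one_ne_zero
    have hP2d : Differentiable ℝ P2 := by
      rw [hP2]; exact (quintic_contDiff (n := 1) _ _ _ _ _ _).differentiable one_ne_zero
    have hmid : (x1/2) ∈ Set.Ioo (0:ℝ) x1 := ⟨by linarith, by linarith⟩
    set μ : ℝ := w3 (x1/2) - P3 (x1/2) with hμ
    have hw3aff : ∀ x ∈ Set.Ioo (0:ℝ) x1, w3 x - P3 x = μ := by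
      intro x hx
      rw [hμ]
      refine const_of_derivWithin_zero' (convex_Ioo 0 x1) uqo
        (f := fun x => w3 x - P3 x) (hw3diff.sub hP3d.differentiableOn) ?_ hx hmid
      intro z hz
      rw [derivWithin_fun_sub (hw3diff z hz) (hP3d.differentiableOn z hz), hdw3 z hz,
        (H3 z).hasDerivWithinAt.derivWithin (uqo z hz)]
      ring
    set ν : ℝ := w2 (x1/2) - P2 (x1/2) - μ*(x1/2) with hν
    have hw2aff : ∀ x ∈ Set.Ioo (0:ℝ) x1, w2 x - P2 x - μ*x = ν := by
      intro x hx
      rw [hν]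
      refine const_of_derivWithin_zero' (convex_Ioo 0 x1) uqo
        (f := fun x => w2 x - P2 x - μ*x)
        ((hw2diff.sub hP2d.differentiableOn).sub
          ((differentiable_fun_id.const_mul μ).differentiableOn)) ?_ hx hmid
      intro z hz
      rw [derivWithin_fun_sub (show DifferentiableWithinAt ℝ (fun x => w2 x - P2 x) (Set.Ioo 0 x1) z
            from (hw2diff.sub hP2d.differentiableOn) z hz)
          (((differentiable_fun_id.const_mul μ).differentiableOn) z hz),
        derivWithin_fun_sub (hw2diff z hz) (hP2d.differentiableOn z hz)]
      have hdw2 : derivWithin w2 (Set.Ioo 0 x1) z = w3 z := by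
        rw [hw2, ← iteratedDerivWithin_succ, show (2:ℕ)+1 = 3 from rfl, hw3]
      have hdμ : derivWithin (fun x : ℝ => μ*x) (Set.Ioo 0 x1) z = μ := by
        have hh := ((hasDerivAt_id z).const_mul μ).hasDerivWithinAt.derivWithin (uqo z hz)
        simpa using hh
      rw [hdw2, hdμ, (H2d z).hasDerivWithinAt.derivWithin (uqo z hz)]
      have h := hw3aff z hz
      linarith
    have haff : ∀ x ∈ Set.Ioo (0:ℝ) x1,
        iteratedDerivWithin 2 (fun t => f t - ystar t) (Set.Icc 0 x1) x = μ*x + ν := by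
      intro x hx
      have hxc : x ∈ Set.Icc (0:ℝ) x1 := Set.Ioo_subset_Icc_self hx
      rw [iter2_sub x1 hx1 f ystar hfC (hysC2 2) hxc, hys2 x hxc]
      have hw2Icc : iteratedDerivWithin 2 f (Set.Icc 0 x1) x = w2 x := by
        rw [hw2, ← iteratedDerivWithin_Ioo_eq_Icc 2 f x1 hx]
      rw [hw2Icc]
      have h := hw2aff x hx
      linarith
    have hsq0 : ∫ x in (0:ℝ)..x1,
        (iteratedDerivWithin 2 (fun t => f t - ystar t) (Set.Icc 0 x1) x)^2 = 0 := by
      have hae : ∀ᵐ (x:ℝ), x ∉ ({x1} : Set ℝ) :=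
        measure_eq_zero_iff_ae_notMem.1 (measure_singleton x1)
      have hcongr : ∫ x in (0:ℝ)..x1,
          (iteratedDerivWithin 2 (fun t => f t - ystar t) (Set.Icc 0 x1) x)^2
          = ∫ x in (0:ℝ)..x1,
            (μ*x+ν) * iteratedDerivWithin 2 (fun t => f t - ystar t) (Set.Icc 0 x1) x := by
        apply intervalIntegral.integral_congr_ae
        filter_upwards [hae] with x hxne hxI
        rw [Set.uIoc_of_le hx1.le] at hxI
        have hio : x ∈ Set.Ioo (0:ℝ) x1 := ⟨hxI.1, lt_of_le_of_ne hxI.2 (by simpa using hxne)⟩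
        rw [haff x hio]; ring
      rw [hcongr]
      exact hcross μ ν f hf
    have hEeq : E f = E ystar := by
      have hs := hsplit f hfC
      have hc := hcross Al Bl f hf
      rw [hs, hc, hsq0]; ring
    exact huniq f hf hEeq
  exact ⟨hAdmY, hmin, huniq, hEL, hELuniq⟩
end
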